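/- arXiv:2005.02484 — 2 statements merged into one kernel-verified Lean document; each statement's English description precedes it below -/
import Mathlib

section
/- Let (X,T) be a TDS and μ a T-invariant ergodic Borel probability measure on X. The following conditions are equivalent: (1) (X,T) is μ-FK-sensitive; (2) (X,T) is μ-FK-expansive; (3) there exists ε > 0 such that μ(B_ε^FK(x)) = 0 for μ-almost every x ∈ X; (4) (X,T) is not μ-FK-continuous. -/
open Filter Topology MeasureTheory Set

namespace FKPaper

variable {X : Type*} [MetricSpace X]

/-- The maximal fit of an `(n,δ)`-match between the orbits of `x` and `z` under `T`:
the largest cardinality of the domain of an order-preserving bijection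
`π : D → R`, with `D, R ⊆ {0,…,n-1}` and `dist (T^[i] x) (T^[π i] z) < δ` for `i ∈ D`. -/
noncomputable def maxFit (T : X → X) (δ : ℝ) (n : ℕ) (x z : X) : ℕ :=
  sSup {k : ℕ | ∃ i j : Fin k → ℕ, StrictMono i ∧ StrictMono j ∧
    (∀ s, i s < n) ∧ (∀ s, j s < n) ∧ ∀ s, dist (T^[i s] x) (T^[j s] z) < δ}

/-- `f̄_{n,δ}(x,z) = 1 - (maximal fit of an (n,δ)-match of x and z)/n`. -/
noncomputable def fbarN (T : X → X) (δ : ℝ) (n : ℕ) (x z : X) : ℝ :=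
  1 - (maxFit T δ n x z : ℝ) / n

/-- `f̄_δ(x,z) = limsup_{n→∞} f̄_{n,δ}(x,z)`. -/
noncomputable def fbar (T : X → X) (δ : ℝ) (x z : X) : ℝ :=
  Filter.limsup (fun n => fbarN T δ n x z) Filter.atTop

/-- The Feldman–Katok pseudometric `ρ_FK(x,z) = inf {δ > 0 : f̄_δ(x,z) < δ}`. -/
noncomputable def rhoFK (T : X → X) (x z : X) : ℝ :=
  sInf {δ : ℝ | 0 < δ ∧ fbar T δ x z < δ}

/-- `μ`-FK-continuity. -/
def MuFKContinuous [MeasurableSpace X] (T : X → X) (μ : Measure X) : Prop :=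
  ∀ τ > 0, ∃ M : Set X, IsCompact M ∧ ENNReal.ofReal (1 - τ) ≤ μ M ∧
    ∀ ε > 0, ∃ δ > 0, ∀ x ∈ M, ∀ y ∈ M, dist x y ≤ δ → rhoFK T x y ≤ ε

/-- `μ`-FK-sensitivity. -/
def MuFKSensitive [MeasurableSpace X] (T : X → X) (μ : Measure X) : Prop :=
  ∃ ε₀ > 0, ∀ A : Set X, MeasurableSet A → 0 < μ A →
    ∃ x ∈ A, ∃ y ∈ A, ε₀ < rhoFK T x y

/-- `μ`-FK-expansivity. -/
def MuFKExpansive [MeasurableSpace X] (T : X → X) (μ : Measure X) : Prop :=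
  ∃ ε₀ > 0, (μ.prod μ) {p : X × X | ε₀ < rhoFK T p.1 p.2} = 1

end FKPaper

namespace FKPaper

variable {X : Type*} [MetricSpace X]

-- ### auxiliary
def MS (T : X → X) (δ : ℝ) (n : ℕ) (x z : X) : Set ℕ :=
  {k : ℕ | ∃ i j : Fin k → ℕ, StrictMono i ∧ StrictMono j ∧
    (∀ s, i s < n) ∧ (∀ s, j s < n) ∧ ∀ s, dist (T^[i s] x) (T^[j s] z) < δ}

lemma maxFit_def (T : X → X) (δ : ℝ) (n : ℕ) (x z : X) :
    maxFit T δ n x z = sSup (MS T δ n x z) := rfl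

variable {T : X → X} {δ δ₁ δ₂ : ℝ} {n k : ℕ} {x y z : X}

lemma MS_zero_mem : 0 ∈ MS T δ n x z :=
  ⟨Fin.elim0, Fin.elim0, fun a => a.elim0, fun a => a.elim0,
    fun a => a.elim0, fun a => a.elim0, fun a => a.elim0⟩

lemma MS_nonempty : (MS T δ n x z).Nonempty := ⟨0, MS_zero_mem⟩

lemma le_of_mem_MS (h : k ∈ MS T δ n x z) : k ≤ n := by
  obtain ⟨i, j, hi, hj, hin, hjn, _⟩ := h
  calc k = (Finset.univ : Finset (Fin k)).card := by simp
  _ ≤ (Finset.range n).card := Finset.card_le_card_of_injOn i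
      (fun s _ => Finset.mem_range.2 (hin s)) (hi.injective.injOn)
  _ = n := Finset.card_range n

lemma MS_bddAbove : BddAbove (MS T δ n x z) := ⟨n, fun _ h => le_of_mem_MS h⟩

lemma maxFit_mem : maxFit T δ n x z ∈ MS T δ n x z :=
  Nat.sSup_mem MS_nonempty MS_bddAbove

lemma maxFit_le : maxFit T δ n x z ≤ n := le_of_mem_MS maxFit_mem

lemma le_maxFit (h : k ∈ MS T δ n x z) : k ≤ maxFit T δ n x z :=
  le_csSup MS_bddAbove h

lemma MS_symm : MS T δ n x z = MS T δ n z x := by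
  ext k
  constructor <;> rintro ⟨i, j, hi, hj, hin, hjn, hd⟩ <;>
    exact ⟨j, i, hj, hi, hjn, hin, fun s => by rw [dist_comm]; exact hd s⟩

lemma maxFit_symm : maxFit T δ n x z = maxFit T δ n z x := by
  rw [maxFit_def, maxFit_def, MS_symm]

lemma MS_mono_delta (h : δ₁ ≤ δ₂) : MS T δ₁ n x z ⊆ MS T δ₂ n x z := by
  rintro k ⟨i, j, hi, hj, hin, hjn, hd⟩
  exact ⟨i, j, hi, hj, hin, hjn, fun s => lt_of_lt_of_le (hd s) h⟩

lemma maxFit_mono_delta (h : δ₁ ≤ δ₂) : maxFit T δ₁ n x z ≤ maxFit T δ₂ n x z :=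
  csSup_le_csSup MS_bddAbove MS_nonempty (MS_mono_delta h)

lemma MS_mono_n {m : ℕ} (h : n ≤ m) : MS T δ n x z ⊆ MS T δ m x z := by
  rintro k ⟨i, j, hi, hj, hin, hjn, hd⟩
  exact ⟨i, j, hi, hj, fun s => lt_of_lt_of_le (hin s) h,
    fun s => lt_of_lt_of_le (hjn s) h, hd⟩

lemma maxFit_mono_n {m : ℕ} (h : n ≤ m) : maxFit T δ n x z ≤ maxFit T δ m x z :=
  csSup_le_csSup MS_bddAbove MS_nonempty (MS_mono_n h)

lemma MS_downward (h : k ∈ MS T δ n x z) {m : ℕ} (hm : m ≤ k) : m ∈ MS T δ n x z := by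
  obtain ⟨i, j, hi, hj, hin, hjn, hd⟩ := h
  exact ⟨i ∘ Fin.castLE hm, j ∘ Fin.castLE hm,
    hi.comp (Fin.strictMono_castLE hm), hj.comp (Fin.strictMono_castLE hm),
    fun s => hin _, fun s => hjn _, fun s => hd _⟩

lemma mem_MS_iff_le_maxFit : k ∈ MS T δ n x z ↔ k ≤ maxFit T δ n x z :=
  ⟨le_maxFit, fun h => MS_downward maxFit_mem h⟩

/-- full-fit for equal points: `n ∈ MS` when `δ > 0`. -/
lemma n_mem_MS_self (hδ : 0 < δ) : n ∈ MS T δ n x x :=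
  ⟨Fin.val, Fin.val, fun _ _ h => h, fun _ _ h => h, fun s => s.isLt, fun s => s.isLt,
    fun s => by simpa using hδ⟩

lemma maxFit_self (hδ : 0 < δ) : maxFit T δ n x x = n :=
  le_antisymm maxFit_le (le_maxFit (n_mem_MS_self hδ))

/-- composition of matches (triangle inequality at the `maxFit` level). -/
lemma maxFit_triangle :
    maxFit T δ₁ n x y + maxFit T δ₂ n y z ≤ maxFit T (δ₁ + δ₂) n x z + n := by
  classical
  have h₁ := (maxFit_mem : maxFit T δ₁ n x y ∈ MS T δ₁ n x y)
  have h₂ := (maxFit_mem : maxFit T δ₂ n y z ∈ MS T δ₂ n y z)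
  set k₁ := maxFit T δ₁ n x y with hk₁
  set k₂ := maxFit T δ₂ n y z with hk₂
  obtain ⟨i₁, j₁, hi₁, hj₁, hi₁n, hj₁n, hd₁⟩ := h₁
  obtain ⟨i₂, j₂, hi₂, hj₂, hi₂n, hj₂n, hd₂⟩ := h₂
  set A : Finset ℕ := Finset.univ.image j₁ with hA
  set B : Finset ℕ := Finset.univ.image i₂ with hB
  set E : Finset ℕ := A ∩ B with hE
  -- card bound
  have hcard : k₁ + k₂ ≤ E.card + n := by
    have h1 : A.card = k₁ := by
      rw [hA, Finset.card_image_of_injective _ hj₁.injective]; simp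
    have h2 : B.card = k₂ := by
      rw [hB, Finset.card_image_of_injective _ hi₂.injective]; simp
    have hsub : A ∪ B ⊆ Finset.range n := by
      intro c hc
      rcases Finset.mem_union.1 hc with h | h
      · obtain ⟨s, _, rfl⟩ := Finset.mem_image.1 h
        exact Finset.mem_range.2 (hj₁n s)
      · obtain ⟨s, _, rfl⟩ := Finset.mem_image.1 h
        exact Finset.mem_range.2 (hi₂n s)
    have hu : (A ∪ B).card ≤ n := by
      simpa using Finset.card_le_card hsub
    have hie := Finset.card_union_add_card_inter A B
    rw [← hE] at hie
    omega
  -- E.card ∈ MS (δ₁+δ₂)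
  have hmem : E.card ∈ MS T (δ₁ + δ₂) n x z := by
    set m := E.card with hm
    let e := E.orderIsoOfFin hm.symm
    have hmemE : ∀ s : Fin m, (e s : ℕ) ∈ E := fun s => (e s).2
    have ha : ∀ s : Fin m, ∃ a : Fin k₁, j₁ a = (e s : ℕ) := by
      intro s
      obtain ⟨a, _, h⟩ := Finset.mem_image.1 (Finset.mem_inter.1 (hmemE s)).1
      exact ⟨a, h⟩
    have hb : ∀ s : Fin m, ∃ b : Fin k₂, i₂ b = (e s : ℕ) := by
      intro s
      obtain ⟨b, _, h⟩ := Finset.mem_image.1 (Finset.mem_inter.1 (hmemE s)).2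
      exact ⟨b, h⟩
    choose a haa using ha
    choose b hbb using hb
    have hmono : ∀ {s t : Fin m}, s < t → (e s : ℕ) < (e t : ℕ) := by
      intro s t hst
      exact_mod_cast e.strictMono hst
    refine ⟨fun s => i₁ (a s), fun s => j₂ (b s), ?_, ?_,
      fun s => hi₁n (a s), fun s => hj₂n (b s), ?_⟩
    · intro s t hst
      have h : j₁ (a s) < j₁ (a t) := by rw [haa, haa]; exact hmono hst
      exact hi₁ ((hj₁.lt_iff_lt).1 h)
    · intro s t hst
      have h : i₂ (b s) < i₂ (b t) := by rw [hbb, hbb]; exact hmono hst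
      exact hj₂ ((hi₂.lt_iff_lt).1 h)
    · intro s
      have hyz : dist (T^[j₁ (a s)] y) (T^[j₂ (b s)] z) < δ₂ := by
        rw [haa s, ← hbb s]
        exact hd₂ (b s)
      calc dist (T^[i₁ (a s)] x) (T^[j₂ (b s)] z)
          ≤ dist (T^[i₁ (a s)] x) (T^[j₁ (a s)] y)
            + dist (T^[j₁ (a s)] y) (T^[j₂ (b s)] z) := dist_triangle _ _ _
        _ < δ₁ + δ₂ := add_lt_add (hd₁ (a s)) hyz
  have h3 := le_maxFit hmem
  omega

/-- shifting both orbits: `maxFit` drops by at most 1. -/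
lemma maxFit_shift : maxFit T δ (n + 1) x y ≤ maxFit T δ n (T x) (T y) + 1 := by
  have h := (maxFit_mem : maxFit T δ (n+1) x y ∈ MS T δ (n+1) x y)
  set k := maxFit T δ (n + 1) x y with hk
  clear_value k
  obtain ⟨i, j, hi, hj, hin, hjn, hd⟩ := h
  rcases Nat.eq_zero_or_pos k with h0 | hpos
  · omega
  obtain ⟨m, rfl⟩ : ∃ m, k = m + 1 := ⟨k - 1, by omega⟩
  have hipos : ∀ s : Fin (m+1), 0 < s → 0 < i s ∧ 0 < j s := by
    intro s hs
    constructor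
    · have : i 0 < i s := hi hs
      omega
    · have : j 0 < j s := hj hs
      omega
  have hmem : m ∈ MS T δ n (T x) (T y) := by
    refine ⟨fun s => i s.succ - 1, fun s => j s.succ - 1, ?_, ?_, ?_, ?_, ?_⟩
    · intro s t hst
      dsimp only
      have h1 := (hipos s.succ s.succ_pos).1
      have h2 : i s.succ < i t.succ := hi (Fin.succ_lt_succ_iff.2 hst)
      omega
    · intro s t hst
      dsimp only
      have h1 := (hipos s.succ s.succ_pos).2
      have h2 : j s.succ < j t.succ := hj (Fin.succ_lt_succ_iff.2 hst)
      omega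
    · intro s
      dsimp only
      have h1 := (hipos s.succ s.succ_pos).1
      have h2 := hin s.succ
      omega
    · intro s
      dsimp only
      have h1 := (hipos s.succ s.succ_pos).2
      have h2 := hjn s.succ
      omega
    · intro s
      dsimp only
      have h1 := (hipos s.succ s.succ_pos).1
      have h2 := (hipos s.succ s.succ_pos).2
      have e1 : T^[i s.succ - 1] (T x) = T^[i s.succ] x := by
        conv_rhs => rw [show i s.succ = (i s.succ - 1) + 1 by omega]
        rw [Function.iterate_succ_apply]
      have e2 : T^[j s.succ - 1] (T y) = T^[j s.succ] y := by
        conv_rhs => rw [show j s.succ = (j s.succ - 1) + 1 by omega]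
        rw [Function.iterate_succ_apply]
      rw [e1, e2]
      exact hd s.succ
  have := le_maxFit hmem
  omega

end FKPaper

-- PART 2 (appended to part1 contents for testing)
namespace FKPaper

variable {X : Type*} [MetricSpace X] {T : X → X} {δ δ₁ δ₂ : ℝ} {n k : ℕ} {x y z : X}

lemma fbarN_le_one : fbarN T δ n x z ≤ 1 := by
  unfold fbarN
  have : (0:ℝ) ≤ (maxFit T δ n x z : ℝ) / n := by positivity
  linarith

lemma fbarN_nonneg : 0 ≤ fbarN T δ n x z := by
  unfold fbarN
  rcases Nat.eq_zero_or_pos n with h | h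
  · subst h; simp
  · have h1 : (maxFit T δ n x z : ℝ) ≤ (n : ℝ) := by exact_mod_cast maxFit_le
    have h2 : (maxFit T δ n x z : ℝ) / n ≤ 1 := by
      rw [div_le_one (by exact_mod_cast h)]
      exact h1
    linarith

lemma fbarN_bddAbove : IsBoundedUnder (· ≤ ·) atTop (fun n => fbarN T δ n x z) :=
  isBoundedUnder_of ⟨1, fun _ => fbarN_le_one⟩

lemma fbarN_bddBelow : IsBoundedUnder (· ≥ ·) atTop (fun n => fbarN T δ n x z) :=
  isBoundedUnder_of ⟨0, fun _ => fbarN_nonneg⟩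

lemma fbarN_cobdd : IsCoboundedUnder (· ≤ ·) atTop (fun n => fbarN T δ n x z) :=
  fbarN_bddBelow.isCoboundedUnder_le

lemma fbar_le_one : fbar T δ x z ≤ 1 :=
  limsup_le_of_le fbarN_cobdd (Filter.Eventually.of_forall fun _ => fbarN_le_one)

lemma fbar_nonneg : 0 ≤ fbar T δ x z :=
  le_limsup_of_frequently_le (Filter.Frequently.of_forall fun _ => fbarN_nonneg) fbarN_bddAbove

lemma fbarN_antitone (h : δ₁ ≤ δ₂) : fbarN T δ₂ n x z ≤ fbarN T δ₁ n x z := by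
  unfold fbarN
  have : (maxFit T δ₁ n x z : ℝ) ≤ (maxFit T δ₂ n x z : ℝ) := by
    exact_mod_cast maxFit_mono_delta h
  have hn : (0:ℝ) ≤ (n:ℝ) := by positivity
  rcases Nat.eq_zero_or_pos n with h0 | h0
  · subst h0; norm_num
  · have hd : (maxFit T δ₁ n x z : ℝ) / n ≤ (maxFit T δ₂ n x z : ℝ) / n := by
      gcongr
    linarith

lemma fbar_antitone (h : δ₁ ≤ δ₂) : fbar T δ₂ x z ≤ fbar T δ₁ x z :=
  limsup_le_limsup (Filter.Eventually.of_forall fun _ => fbarN_antitone h)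
    fbarN_cobdd fbarN_bddAbove

lemma fbarN_symm : fbarN T δ n x z = fbarN T δ n z x := by
  unfold fbarN; rw [maxFit_symm]

lemma fbar_symm : fbar T δ x z = fbar T δ z x := by
  unfold fbar; simp_rw [fbarN_symm (x := x)]

lemma fbarN_triangle :
    fbarN T (δ₁ + δ₂) n x z ≤ fbarN T δ₁ n x y + fbarN T δ₂ n y z := by
  rcases Nat.eq_zero_or_pos n with h0 | h0
  · subst h0; unfold fbarN; norm_num
  have hn : (0:ℝ) < n := by exact_mod_cast h0
  have key : (maxFit T δ₁ n x y : ℝ) + (maxFit T δ₂ n y z : ℝ)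
      ≤ (maxFit T (δ₁ + δ₂) n x z : ℝ) + n := by
    exact_mod_cast maxFit_triangle (y := y)
  unfold fbarN
  have h1 : ((maxFit T δ₁ n x y : ℝ) + (maxFit T δ₂ n y z : ℝ)) / n
      ≤ ((maxFit T (δ₁ + δ₂) n x z : ℝ) + n) / n := by gcongr
  rw [add_div, add_div, div_self hn.ne'] at h1
  linarith

lemma limsup_add_le' (u v w : ℕ → ℝ) (hu0 : ∀ n, 0 ≤ u n) (hu1 : ∀ n, u n ≤ 1)
    (hv0 : ∀ n, 0 ≤ v n) (hv1 : ∀ n, v n ≤ 1) (hw : ∀ n, w n ≤ u n + v n)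
    (hw0 : ∀ n, 0 ≤ w n) :
    limsup w atTop ≤ limsup u atTop + limsup v atTop := by
  have hb : IsBoundedUnder (· ≤ ·) atTop (u + v) :=
    isBoundedUnder_of ⟨2, fun n => by
      show u n + v n ≤ 2
      have := hu1 n
      have := hv1 n
      linarith⟩
  have h := limsup_add_le (f := atTop) (u := u) (v := v)
    (isBoundedUnder_of ⟨0, hu0⟩) (isBoundedUnder_of ⟨1, hu1⟩)
    ((isBoundedUnder_of ⟨0, hv0⟩ : IsBoundedUnder (· ≥ ·) atTop v).isCoboundedUnder_le)
    (isBoundedUnder_of ⟨1, hv1⟩)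
  refine le_trans (limsup_le_limsup (Filter.Eventually.of_forall fun n => hw n)
    ((isBoundedUnder_of ⟨0, hw0⟩ :
      IsBoundedUnder (· ≥ ·) atTop w).isCoboundedUnder_le)
    hb) h

lemma fbar_triangle : fbar T (δ₁ + δ₂) x z ≤ fbar T δ₁ x y + fbar T δ₂ y z :=
  limsup_add_le' _ _ _ (fun _ => fbarN_nonneg) (fun _ => fbarN_le_one)
    (fun _ => fbarN_nonneg) (fun _ => fbarN_le_one)
    (fun _ => fbarN_triangle) (fun _ => fbarN_nonneg)

lemma fbarN_shift : fbarN T δ n (T x) (T y) ≤ fbarN T δ n x y + 1 / (n:ℝ) := by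
  rcases Nat.eq_zero_or_pos n with h0 | h0
  · subst h0; unfold fbarN; norm_num
  have hn : (0:ℝ) < n := by exact_mod_cast h0
  have key : (maxFit T δ n x y : ℝ) ≤ (maxFit T δ n (T x) (T y) : ℝ) + 1 := by
    exact_mod_cast le_trans (maxFit_mono_n (Nat.le_succ n)) maxFit_shift
  unfold fbarN
  have h1 : (maxFit T δ n x y : ℝ) / n ≤ ((maxFit T δ n (T x) (T y) : ℝ) + 1) / n := by gcongr
  rw [add_div] at h1
  linarith

lemma fbar_shift : fbar T δ (T x) (T y) ≤ fbar T δ x y := by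
  have hv : Tendsto (fun n : ℕ => 1 / (n:ℝ)) atTop (nhds 0) := by
    simpa using (tendsto_one_div_atTop_nhds_zero_nat : Tendsto (fun n : ℕ => 1 / (n:ℝ)) atTop (nhds 0))
  have hv0 : ∀ n : ℕ, (0:ℝ) ≤ 1 / (n:ℝ) := fun n => by positivity
  have hv1 : ∀ n : ℕ, (1:ℝ) / (n:ℝ) ≤ 1 := by
    intro n
    rcases Nat.eq_zero_or_pos n with h | h
    · subst h; norm_num
    · rw [div_le_one (by exact_mod_cast h)]
      exact_mod_cast h
  have h := limsup_add_le' (fun n => fbarN T δ n x y) (fun n : ℕ => 1 / (n:ℝ))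
    (fun n => fbarN T δ n (T x) (T y)) (fun _ => fbarN_nonneg) (fun _ => fbarN_le_one)
    hv0 hv1 (fun _ => fbarN_shift) (fun _ => fbarN_nonneg)
  have hlim : limsup (fun n : ℕ => 1 / (n:ℝ)) atTop = 0 := hv.limsup_eq
  rw [hlim, add_zero] at h
  exact h

lemma fbar_self (hδ : 0 < δ) : fbar T δ x x = 0 := by
  have h : ∀ᶠ n in (atTop : Filter ℕ), fbarN T δ n x x = 0 := by
    filter_upwards [eventually_ge_atTop 1] with n hn
    unfold fbarN
    rw [maxFit_self hδ, div_self (by exact_mod_cast Nat.one_le_iff_ne_zero.1 hn : (n:ℝ) ≠ 0)]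
    ring
  unfold fbar
  rw [limsup_congr h]
  exact limsup_const 0

end FKPaper
namespace FKPaper

variable {X : Type*} [MetricSpace X] {T : X → X} {δ δ₁ δ₂ a : ℝ} {n k : ℕ} {x y z : X}

/-- the defining set of `rhoFK`. -/
def FKS (T : X → X) (x z : X) : Set ℝ := {δ : ℝ | 0 < δ ∧ fbar T δ x z < δ}

lemma rhoFK_def : rhoFK T x z = sInf (FKS T x z) := rfl

lemma mem_FKS_of_one_lt (h : 1 < δ) : δ ∈ FKS T x z :=
  ⟨lt_trans one_pos h, lt_of_le_of_lt fbar_le_one h⟩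

lemma FKS_nonempty : (FKS T x z).Nonempty := ⟨2, mem_FKS_of_one_lt one_lt_two⟩

lemma FKS_bddBelow : BddBelow (FKS T x z) := ⟨0, fun _ h => h.1.le⟩

lemma FKS_upward (h : δ₁ ∈ FKS T x z) (hle : δ₁ ≤ δ₂) : δ₂ ∈ FKS T x z :=
  ⟨lt_of_lt_of_le h.1 hle, lt_of_le_of_lt (fbar_antitone hle) (lt_of_lt_of_le h.2 hle)⟩

lemma rhoFK_nonneg : 0 ≤ rhoFK T x z := le_csInf FKS_nonempty fun _ h => h.1.le

lemma rhoFK_le_of_mem (h : δ ∈ FKS T x z) : rhoFK T x z ≤ δ := csInf_le FKS_bddBelow h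

lemma FKS_symm : FKS T x z = FKS T z x := by
  unfold FKS; simp_rw [fbar_symm (x := x)]

lemma rhoFK_symm : rhoFK T x z = rhoFK T z x := by
  rw [rhoFK_def, rhoFK_def, FKS_symm]

lemma rhoFK_self : rhoFK T x x = 0 := by
  refine le_antisymm (le_of_forall_pos_le_add fun ε hε => ?_) rhoFK_nonneg
  rw [zero_add]
  exact rhoFK_le_of_mem ⟨hε, by rw [fbar_self hε]; exact hε⟩

lemma rhoFK_triangle : rhoFK T x z ≤ rhoFK T x y + rhoFK T y z := by
  refine le_of_forall_pos_le_add fun ε hε => ?_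
  obtain ⟨δ₁, h₁, hlt₁⟩ := exists_lt_of_csInf_lt (FKS_nonempty (T := T) (x := x) (z := y))
    (show sInf (FKS T x y) < rhoFK T x y + ε/2 by rw [← rhoFK_def]; linarith)
  obtain ⟨δ₂, h₂, hlt₂⟩ := exists_lt_of_csInf_lt (FKS_nonempty (T := T) (x := y) (z := z))
    (show sInf (FKS T y z) < rhoFK T y z + ε/2 by rw [← rhoFK_def]; linarith)
  have hmem : δ₁ + δ₂ ∈ FKS T x z :=
    ⟨add_pos h₁.1 h₂.1, lt_of_le_of_lt (fbar_triangle (y := y)) (add_lt_add h₁.2 h₂.2)⟩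
  have := rhoFK_le_of_mem hmem
  linarith

lemma rhoFK_shift : rhoFK T (T x) (T y) ≤ rhoFK T x y := by
  apply csInf_le_csInf FKS_bddBelow FKS_nonempty
  intro δ h
  exact ⟨h.1, lt_of_le_of_lt fbar_shift h.2⟩

lemma rhoFK_lt_iff : rhoFK T x z < a ↔ ∃ q : ℚ, 0 < (q:ℝ) ∧ (q:ℝ) < a ∧ fbar T (q:ℝ) x z < (q:ℝ) := by
  constructor
  · intro h
    obtain ⟨δ, hδ, hlt⟩ := exists_lt_of_csInf_lt FKS_nonempty h
    obtain ⟨q, hq1, hq2⟩ := exists_rat_btwn hlt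
    refine ⟨q, lt_trans hδ.1 hq1, hq2, ?_⟩
    exact lt_of_le_of_lt (fbar_antitone hq1.le) (lt_trans hδ.2 hq1)
  · rintro ⟨q, hq0, hqa, hq⟩
    exact lt_of_le_of_lt (rhoFK_le_of_mem ⟨hq0, hq⟩) hqa

end FKPaper
namespace FKPaper

variable {X : Type*} [MetricSpace X] [SecondCountableTopology X]
  [MeasurableSpace X] [BorelSpace X]
  {T : X → X} {δ a : ℝ} {n k : ℕ}

lemma measurableSet_mem_MS (hT : Continuous T) :
    MeasurableSet {p : X × X | k ∈ MS T δ n p.1 p.2} := by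
  have : {p : X × X | k ∈ MS T δ n p.1 p.2}
      = ⋃ (i : Fin k → ℕ) (j : Fin k → ℕ),
        {p : X × X | StrictMono i ∧ StrictMono j ∧ (∀ s, i s < n) ∧ (∀ s, j s < n) ∧
          ∀ s, dist (T^[i s] p.1) (T^[j s] p.2) < δ} := by
    ext p
    simp only [Set.mem_setOf_eq, Set.mem_iUnion]
    rfl
  rw [this]
  refine MeasurableSet.iUnion fun i => MeasurableSet.iUnion fun j => ?_
  by_cases h : StrictMono i ∧ StrictMono j ∧ (∀ s, i s < n) ∧ (∀ s, j s < n)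
  · obtain ⟨h1, h2, h3, h4⟩ := h
    have : {p : X × X | StrictMono i ∧ StrictMono j ∧ (∀ s, i s < n) ∧ (∀ s, j s < n) ∧
          ∀ s, dist (T^[i s] p.1) (T^[j s] p.2) < δ}
        = ⋂ s, {p : X × X | dist (T^[i s] p.1) (T^[j s] p.2) < δ} := by
      ext p
      simp only [Set.mem_setOf_eq, Set.mem_iInter]
      tauto
    rw [this]
    refine MeasurableSet.iInter fun s => ?_
    have hopen : IsOpen {p : X × X | dist (T^[i s] p.1) (T^[j s] p.2) < δ} := by
      have hc : Continuous fun p : X × X => dist (T^[i s] p.1) (T^[j s] p.2) :=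
        ((hT.iterate _).comp continuous_fst).dist ((hT.iterate _).comp continuous_snd)
      exact isOpen_lt hc continuous_const
    exact hopen.measurableSet
  · have : {p : X × X | StrictMono i ∧ StrictMono j ∧ (∀ s, i s < n) ∧ (∀ s, j s < n) ∧
          ∀ s, dist (T^[i s] p.1) (T^[j s] p.2) < δ} = ∅ := by
      ext p
      simp only [Set.mem_setOf_eq, Set.mem_empty_iff_false, iff_false]
      tauto
    rw [this]
    exact MeasurableSet.empty

lemma measurable_maxFit (hT : Continuous T) :
    Measurable (fun p : X × X => maxFit T δ n p.1 p.2) := by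
  apply measurable_to_countable'
  intro m
  have : (fun p : X × X => maxFit T δ n p.1 p.2) ⁻¹' {m}
      = {p : X × X | m ∈ MS T δ n p.1 p.2} \ {p : X × X | m + 1 ∈ MS T δ n p.1 p.2} := by
    ext p
    simp only [Set.mem_preimage, Set.mem_singleton_iff, Set.mem_diff, Set.mem_setOf_eq,
      mem_MS_iff_le_maxFit]
    omega
  rw [this]
  exact (measurableSet_mem_MS hT).diff (measurableSet_mem_MS hT)

lemma measurable_fbarN (hT : Continuous T) :
    Measurable (fun p : X × X => fbarN T δ n p.1 p.2) := by
  have h1 : Measurable (fun p : X × X => (maxFit T δ n p.1 p.2 : ℝ)) :=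
    measurable_from_top.comp (measurable_maxFit hT)
  exact (measurable_const.sub (h1.div_const _))

lemma measurable_fbar (hT : Continuous T) :
    Measurable (fun p : X × X => fbar T δ p.1 p.2) :=
  Measurable.limsup fun n => measurable_fbarN hT

lemma measurable_rhoFK (hT : Continuous T) :
    Measurable (fun p : X × X => rhoFK T p.1 p.2) := by
  apply measurable_of_Iio
  intro a
  have : (fun p : X × X => rhoFK T p.1 p.2) ⁻¹' (Set.Iio a)
      = ⋃ q : ℚ, {p : X × X | 0 < (q:ℝ) ∧ (q:ℝ) < a ∧ fbar T (q:ℝ) p.1 p.2 < (q:ℝ)} := by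
    ext p
    simp only [Set.mem_preimage, Set.mem_Iio, Set.mem_iUnion, Set.mem_setOf_eq]
    exact rhoFK_lt_iff
  rw [this]
  refine MeasurableSet.iUnion fun q => ?_
  by_cases h : 0 < (q:ℝ) ∧ (q:ℝ) < a
  · have : {p : X × X | 0 < (q:ℝ) ∧ (q:ℝ) < a ∧ fbar T (q:ℝ) p.1 p.2 < (q:ℝ)}
        = (fun p : X × X => fbar T (q:ℝ) p.1 p.2) ⁻¹' (Set.Iio (q:ℝ)) := by
      ext p
      simp only [Set.mem_setOf_eq, Set.mem_preimage, Set.mem_Iio]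
      tauto
    rw [this]
    exact (measurable_fbar hT) measurableSet_Iio
  · have : {p : X × X | 0 < (q:ℝ) ∧ (q:ℝ) < a ∧ fbar T (q:ℝ) p.1 p.2 < (q:ℝ)} = ∅ := by
      ext p
      simp only [Set.mem_setOf_eq, Set.mem_empty_iff_false, iff_false]
      tauto
    rw [this]
    exact MeasurableSet.empty

/-- the closed FK-ball as a section. -/
lemma measurableSet_FKball (hT : Continuous T) (x : X) {ε : ℝ} :
    MeasurableSet {y : X | rhoFK T x y ≤ ε} := by
  have h : MeasurableSet {p : X × X | rhoFK T p.1 p.2 ≤ ε} :=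
    (measurable_rhoFK hT) measurableSet_Iic
  exact measurable_prodMk_left h

lemma measurable_FKball_measure (hT : Continuous T) {μ : MeasureTheory.Measure X}
    [MeasureTheory.SFinite μ] {ε : ℝ} :
    Measurable (fun x : X => μ {y : X | rhoFK T x y ≤ ε}) := by
  have h : MeasurableSet {p : X × X | rhoFK T p.1 p.2 ≤ ε} :=
    (measurable_rhoFK hT) measurableSet_Iic
  exact measurable_measure_prodMk_left h

end FKPaper
namespace FKPaper

open MeasureTheory
open scoped ENNReal

variable {X : Type*} [MetricSpace X] [CompactSpace X] [Nonempty X]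
  [MeasurableSpace X] [BorelSpace X]
  {T : X → X} (μ : Measure X) [IsProbabilityMeasure μ]

/-- L1: positive-measure balls a.e. with uniform lower bound, from ergodicity. -/
lemma ae_ball_pos (hT : Continuous T) (hμ : Ergodic T μ) {ε : ℝ}
    (hne : ¬ ∀ᵐ x ∂μ, μ {y : X | rhoFK T x y ≤ ε} = 0) :
    ∃ m : ℕ, ∀ᵐ x ∂μ, ((m : ℝ≥0∞) + 1)⁻¹ ≤ μ {y : X | rhoFK T x y ≤ ε} := by
  set φ : X → ℝ≥0∞ := fun x => μ {y : X | rhoFK T x y ≤ ε} with hφdef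
  have hφ : Measurable φ := measurable_FKball_measure hT
  have hmono : ∀ x, φ x ≤ φ (T x) := by
    intro x
    have hsub : {y : X | rhoFK T x y ≤ ε} ⊆ T ⁻¹' {y : X | rhoFK T (T x) y ≤ ε} := by
      intro y hy
      exact le_trans rhoFK_shift hy
    calc φ x ≤ μ (T ⁻¹' {y : X | rhoFK T (T x) y ≤ ε}) := measure_mono hsub
      _ = φ (T x) := hμ.toMeasurePreserving.measure_preimage
          (measurableSet_FKball hT _).nullMeasurableSet
  set S : ℕ → Set X := fun m => {x | ((m : ℝ≥0∞) + 1)⁻¹ ≤ φ x} with hSdef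
  have hSmeas : ∀ m, MeasurableSet (S m) := fun m => hφ measurableSet_Ici
  have hSsub : ∀ m, S m ⊆ T ⁻¹' (S m) := fun m x hx => le_trans hx (hmono x)
  have hdich : ∀ m, S m =ᵐ[μ] (∅ : Set X) ∨ S m =ᵐ[μ] Set.univ := fun m =>
    hμ.ae_empty_or_univ_of_ae_le_preimage (hSmeas m).nullMeasurableSet
      (HasSubset.Subset.eventuallyLE (hSsub m))
  by_contra hcon
  push_neg at hcon
  -- then every S m is a.e. empty
  have hSnull : ∀ m, μ (S m) = 0 := by
    intro m
    rcases hdich m with h | h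
    · simpa using measure_congr h
    · exfalso
      apply hcon m
      rw [ae_iff]
      have : {a | ¬¬(fun x => μ {y : X | rhoFK T x y ≤ ε} < ((m : ℝ≥0∞) + 1)⁻¹) a} = (S m)ᶜ := by
        ext x; exact not_not.trans not_le.symm
      rw [this]
      exact ae_eq_univ.1 h
  have hP : μ {x | φ x ≠ 0} = 0 := by
    have hsub : {x | φ x ≠ 0} ⊆ ⋃ m, S m := by
      intro x hx
      obtain ⟨n, hn⟩ := ENNReal.exists_inv_nat_lt hx
      refine Set.mem_iUnion.2 ⟨n, ?_⟩
      have h1 : ((n : ℝ≥0∞) + 1)⁻¹ ≤ ((n : ℝ≥0∞))⁻¹ :=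
        ENNReal.inv_le_inv.2 (le_add_of_nonneg_right zero_le_one)
      exact le_trans h1 hn.le
    exact measure_mono_null hsub (measure_iUnion_null hSnull)
  apply hne
  rw [ae_iff]
  exact hP

/-- L2: finite covering by FK-balls of radius `2ε`. -/
lemma exists_finset_cover (hT : Continuous T) {ε : ℝ} (hε : 0 < ε) {m : ℕ}
    (h : ∀ᵐ x ∂μ, ((m : ℝ≥0∞) + 1)⁻¹ ≤ μ {y : X | rhoFK T x y ≤ ε}) :
    ∃ F : Finset X, ∀ᵐ x ∂μ, ∃ a ∈ F, rhoFK T a x ≤ 2 * ε := by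
  classical
  set c : ℝ≥0∞ := ((m : ℝ≥0∞) + 1)⁻¹ with hc
  set G : Set X := {x | c ≤ μ {y : X | rhoFK T x y ≤ ε}} with hG
  -- bound on separated families inside G
  have hbound : ∀ F : Finset X, ↑F ⊆ G →
      (∀ a ∈ F, ∀ b ∈ F, a ≠ b → 2 * ε < rhoFK T a b) → F.card ≤ m + 1 := by
    intro F hFG hsep
    have hdisj : (↑F : Set X).PairwiseDisjoint (fun a => {y : X | rhoFK T a y ≤ ε}) := by
      intro a ha b hb hab
      refine Set.disjoint_left.2 fun y hya hyb => ?_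
      have htri : rhoFK T a b ≤ rhoFK T a y + rhoFK T y b := rhoFK_triangle
      have h1 : rhoFK T y b = rhoFK T b y := rhoFK_symm
      have := hsep a ha b hb hab
      rw [h1] at htri
      have hya' : rhoFK T a y ≤ ε := hya
      have hyb' : rhoFK T b y ≤ ε := hyb
      linarith
    have hsum : μ (⋃ a ∈ F, {y : X | rhoFK T a y ≤ ε})
        = ∑ a ∈ F, μ {y : X | rhoFK T a y ≤ ε} :=
      measure_biUnion_finset hdisj fun a _ => measurableSet_FKball hT a
    have hge : (F.card : ℝ≥0∞) * c ≤ 1 := by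
      calc (F.card : ℝ≥0∞) * c = ∑ _a ∈ F, c := by
            rw [Finset.sum_const, nsmul_eq_mul]
        _ ≤ ∑ a ∈ F, μ {y : X | rhoFK T a y ≤ ε} :=
            Finset.sum_le_sum fun a ha => hFG ha
        _ = μ (⋃ a ∈ F, {y : X | rhoFK T a y ≤ ε}) := hsum.symm
        _ ≤ 1 := prob_le_one
    have hc0 : c ≠ 0 := by
      simp [hc]
    have hctop : c ≠ ⊤ := by
      simp [hc]
    have h1 : (F.card : ℝ≥0∞) ≤ 1 / c := (ENNReal.le_div_iff_mul_le (Or.inl hc0) (Or.inl hctop)).2 hge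
    have h2 : (1 : ℝ≥0∞) / c = (m : ℝ≥0∞) + 1 := by
      rw [hc, one_div, inv_inv]
    rw [h2] at h1
    exact_mod_cast h1
  -- choose a maximal separated family
  set Q : Set ℕ := {k | ∃ F : Finset X, ↑F ⊆ G ∧
    (∀ a ∈ F, ∀ b ∈ F, a ≠ b → 2 * ε < rhoFK T a b) ∧ F.card = k} with hQ
  have hQ0 : 0 ∈ Q := ⟨∅, by simp, by simp, rfl⟩
  have hQbdd : BddAbove Q := by
    refine ⟨m + 1, fun k hk => ?_⟩
    obtain ⟨F, h1, h2, h3⟩ := hk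
    exact h3 ▸ hbound F h1 h2
  obtain ⟨F, hFG, hFsep, hFcard⟩ := Nat.sSup_mem ⟨0, hQ0⟩ hQbdd
  have hmax : ∀ x ∈ G, ∃ a ∈ F, rhoFK T a x ≤ 2 * ε := by
    intro x hx
    by_contra hcon
    push_neg at hcon
    have hxF : x ∉ F := by
      intro hxF
      have := hcon x hxF
      have h0 : rhoFK T x x = 0 := rhoFK_self
      rw [h0] at this
      linarith
    have hmem : F.card + 1 ∈ Q := by
      refine ⟨insert x F, ?_, ?_, ?_⟩
      · intro a ha
        rcases Finset.mem_insert.1 ha with rfl | ha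
        · exact hx
        · exact hFG ha
      · intro a ha b hb hab
        rcases Finset.mem_insert.1 ha with rfl | ha'
        · rcases Finset.mem_insert.1 hb with rfl | hb'
          · exact absurd rfl hab
          · rw [show rhoFK T a b = rhoFK T b a from rhoFK_symm]
            exact hcon b hb'
        · rcases Finset.mem_insert.1 hb with rfl | hb'
          · exact hcon a ha'
          · exact hFsep a ha' b hb' hab
      · rw [Finset.card_insert_of_notMem hxF]
    have hle := le_csSup hQbdd hmem
    omega
  refine ⟨F, ?_⟩
  filter_upwards [h] with x hx
  exact hmax x hx

end FKPaper
namespace FKPaper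

open MeasureTheory
open scoped ENNReal

variable {X : Type*} [MetricSpace X] [CompactSpace X] [Nonempty X]
  [MeasurableSpace X] [BorelSpace X]
  {T : X → X} (μ : Measure X) [IsProbabilityMeasure μ]

omit [Nonempty X] in
/-- L3: a compact set of almost full measure on which closeness implies FK-closeness. -/
lemma exists_compact_piece (hT : Continuous T) {ε : ℝ}
    {η : ℝ≥0∞} (hη : η ≠ 0)
    (hF : ∃ F : Finset X, ∀ᵐ x ∂μ, ∃ a ∈ F, rhoFK T a x ≤ 2 * ε) :
    ∃ M : Set X, IsCompact M ∧ μ Mᶜ ≤ η ∧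
      ∃ δ > (0:ℝ), ∀ x ∈ M, ∀ y ∈ M, dist x y ≤ δ → rhoFK T x y ≤ 4 * ε := by
  classical
  obtain ⟨F, hae⟩ := hF
  set N := F.card with hN
  set g : Fin N → X := fun s => ((F.equivFin.symm s : X)) with hg
  set A : Fin N → Set X := fun s => {y | rhoFK T (g s) y ≤ 2*ε} with hA
  set A' : Fin N → Set X := fun s => A s \ ⋃ (t : Fin N) (_ : t < s), A t with hA'
  have hAmeas : ∀ s, MeasurableSet (A s) := fun s => measurableSet_FKball hT _
  have hA'meas : ∀ s, MeasurableSet (A' s) := fun s => (hAmeas s).diff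
    (MeasurableSet.iUnion fun t => MeasurableSet.iUnion fun _ => hAmeas t)
  have hA'subA : ∀ s, A' s ⊆ A s := fun s => Set.diff_subset
  have hA'disj : ∀ s t, s ≠ t → Disjoint (A' s) (A' t) := by
    intro s t hst
    rcases lt_or_gt_of_ne hst with h | h
    · refine Set.disjoint_left.2 fun y hys hyt => ?_
      exact hyt.2 (Set.mem_iUnion.2 ⟨s, Set.mem_iUnion.2 ⟨h, hys.1⟩⟩)
    · refine Set.disjoint_left.2 fun y hys hyt => ?_
      exact hys.2 (Set.mem_iUnion.2 ⟨t, Set.mem_iUnion.2 ⟨h, hyt.1⟩⟩)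
  have hcoverA' : ∀ᵐ x ∂μ, x ∈ ⋃ s, A' s := by
    filter_upwards [hae] with x hx
    obtain ⟨a, haF, hax⟩ := hx
    have hxA : x ∈ ⋃ s, A s := by
      refine Set.mem_iUnion.2 ⟨F.equivFin ⟨a, haF⟩, ?_⟩
      show rhoFK T (g _) x ≤ 2*ε
      rw [hg]
      simp only [Equiv.symm_apply_apply]
      exact hax
    set I : Finset (Fin N) := Finset.univ.filter (fun s => x ∈ A s) with hI
    have hIne : I.Nonempty := by
      obtain ⟨s, hs⟩ := Set.mem_iUnion.1 hxA
      exact ⟨s, Finset.mem_filter.2 ⟨Finset.mem_univ _, hs⟩⟩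
    set s₀ := I.min' hIne with hs₀def
    have hs₀ : x ∈ A s₀ := (Finset.mem_filter.1 (I.min'_mem hIne)).2
    refine Set.mem_iUnion.2 ⟨s₀, hs₀, fun hmem => ?_⟩
    obtain ⟨t, ht⟩ := Set.mem_iUnion.1 hmem
    obtain ⟨hts, hxt⟩ := Set.mem_iUnion.1 ht
    have hle : s₀ ≤ t := I.min'_le t (Finset.mem_filter.2 ⟨Finset.mem_univ _, hxt⟩)
    exact absurd hts (not_lt.2 hle)
  -- choose compact pieces
  have hημ : η / ((N:ℝ≥0∞)+1) ≠ 0 := by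
    rw [ne_eq, ENNReal.div_eq_zero_iff]
    push_neg
    exact ⟨hη, by simp⟩
  choose C hCsub hCcomp hClt using fun s : Fin N =>
    (hA'meas s).exists_isCompact_lt_add (measure_ne_top μ _) (ε := η / ((N:ℝ≥0∞)+1)) hημ
  have hdiffle : ∀ s, μ (A' s \ C s) ≤ η / ((N:ℝ≥0∞)+1) := fun s =>
    (measure_diff_lt_of_lt_add (hCcomp s).measurableSet.nullMeasurableSet (hCsub s)
      (measure_ne_top μ _) (hClt s)).le
  set M := ⋃ s, C s with hM
  have hMcomp : IsCompact M := isCompact_iUnion hCcomp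
  refine ⟨M, hMcomp, ?_, ?_⟩
  · -- measure bound
    have h1 : Mᶜ ⊆ {x | x ∉ ⋃ s, A' s} ∪ ⋃ s, (A' s \ C s) := by
      intro x hx
      by_cases hxA : x ∈ ⋃ s, A' s
      · obtain ⟨s, hs⟩ := Set.mem_iUnion.1 hxA
        exact Or.inr (Set.mem_iUnion.2 ⟨s, hs, fun hC => hx (Set.mem_iUnion.2 ⟨s, hC⟩)⟩)
      · exact Or.inl hxA
    have h2 : μ {x | x ∉ ⋃ s, A' s} = 0 := by
      have := hcoverA'
      rw [ae_iff] at this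
      exact this
    have hNle : (N:ℝ≥0∞) * (((N:ℝ≥0∞))+1)⁻¹ ≤ 1 :=
      calc (N:ℝ≥0∞) * (((N:ℝ≥0∞))+1)⁻¹
          ≤ (((N:ℝ≥0∞))+1) * (((N:ℝ≥0∞))+1)⁻¹ :=
            mul_le_mul_left (le_add_of_nonneg_right zero_le_one) _
        _ = 1 := ENNReal.mul_inv_cancel (by simp) (by simp)
    calc μ Mᶜ ≤ μ ({x | x ∉ ⋃ s, A' s} ∪ ⋃ s, (A' s \ C s)) := measure_mono h1
      _ ≤ μ {x | x ∉ ⋃ s, A' s} + μ (⋃ s, (A' s \ C s)) := measure_union_le _ _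
      _ ≤ 0 + ∑ s : Fin N, μ (A' s \ C s) :=
          add_le_add (le_of_eq h2) (measure_iUnion_fintype_le μ _)
      _ ≤ 0 + ∑ _s : Fin N, η / ((N:ℝ≥0∞)+1) :=
          add_le_add le_rfl (Finset.sum_le_sum fun s _ => hdiffle s)
      _ = (N:ℝ≥0∞) * (η / ((N:ℝ≥0∞)+1)) := by
          rw [zero_add, Finset.sum_const, nsmul_eq_mul]
          simp
      _ = η * ((N:ℝ≥0∞) * (((N:ℝ≥0∞))+1)⁻¹) := by
          rw [ENNReal.div_eq_inv_mul]; ring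
      _ ≤ η * 1 := mul_le_mul_right hNle η
      _ = η := mul_one η
  · -- the δ of uniform FK-continuity on M
    have hsame : ∀ x y : X, (∃ s, x ∈ C s ∧ y ∈ C s) → rhoFK T x y ≤ 4 * ε := by
      rintro x y ⟨s, hxs, hys⟩
      have hx : rhoFK T (g s) x ≤ 2*ε := (hA'subA s (hCsub s hxs))
      have hy : rhoFK T (g s) y ≤ 2*ε := (hA'subA s (hCsub s hys))
      have htri : rhoFK T x y ≤ rhoFK T x (g s) + rhoFK T (g s) y := rhoFK_triangle
      have hsymm : rhoFK T x (g s) = rhoFK T (g s) x := rhoFK_symm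
      rw [hsymm] at htri
      linarith
    have hCdisj : ∀ s t, s ≠ t → Disjoint (C s) (C t) := fun s t hst =>
      Set.disjoint_of_subset (hCsub s) (hCsub t) (hA'disj s t hst)
    set D : Set (X × X) := ⋃ p ∈ {p : Fin N × Fin N | p.1 ≠ p.2}, C p.1 ×ˢ C p.2 with hD
    have hDcomp : IsCompact D :=
      (Set.toFinite _).isCompact_biUnion fun p _ => (hCcomp p.1).prod (hCcomp p.2)
    have hDoff : ∀ q ∈ D, q.1 ≠ q.2 := by
      intro q hq
      obtain ⟨p, hpne, hq'⟩ := Set.mem_iUnion₂.1 hq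
      intro heq
      have h1 : q.1 ∈ C p.1 := hq'.1
      have h2 : q.1 ∈ C p.2 := heq ▸ hq'.2
      exact Set.disjoint_left.1 (hCdisj p.1 p.2 hpne) h1 h2
    have hkey : ∀ x ∈ M, ∀ y ∈ M, (x, y) ∉ D → rhoFK T x y ≤ 4 * ε := by
      intro x hx y hy hxy
      obtain ⟨s, hs⟩ := Set.mem_iUnion.1 hx
      obtain ⟨t, ht⟩ := Set.mem_iUnion.1 hy
      rcases eq_or_ne s t with rfl | hst
      · exact hsame x y ⟨s, hs, ht⟩
      · refine absurd (?_ : (x, y) ∈ D) hxy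
        rw [hD]
        exact Set.mem_iUnion₂.2 ⟨(s, t), hst, ⟨hs, ht⟩⟩
    by_cases hDne : D.Nonempty
    · obtain ⟨q, hqD, hqmin⟩ := hDcomp.exists_isMinOn hDne
        ((continuous_fst.dist continuous_snd).continuousOn)
      have hqpos : 0 < dist q.1 q.2 := dist_pos.2 (hDoff q hqD)
      refine ⟨dist q.1 q.2 / 2, by linarith, fun x hx y hy hdist => ?_⟩
      apply hkey x hx y hy
      intro hmem
      have h5 : dist q.1 q.2 ≤ dist (x, y).1 (x, y).2 := hqmin hmem
      simp only at h5
      linarith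
    · refine ⟨1, one_pos, fun x hx y hy _ => ?_⟩
      apply hkey x hx y hy
      intro hmem
      exact hDne ⟨_, hmem⟩

end FKPaper
namespace FKPaper

open MeasureTheory
open scoped ENNReal

variable {X : Type*} [MetricSpace X] [CompactSpace X] [Nonempty X]
  [MeasurableSpace X] [BorelSpace X]
  {T : X → X} (μ : Measure X) [IsProbabilityMeasure μ]

/-- L4: if no FK-ball radius has a.e. null balls, the system is `μ`-FK-continuous. -/
lemma muFKContinuous_of_not (hT : Continuous T) (hμ : Ergodic T μ)
    (hne : ∀ ε > (0:ℝ), ¬ ∀ᵐ x ∂μ, μ {y : X | rhoFK T x y ≤ ε} = 0) :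
    MuFKContinuous T μ := by
  intro τ hτ
  have hcomp : ∀ k : ℕ, ∃ M : Set X, IsCompact M ∧
      μ Mᶜ ≤ ENNReal.ofReal τ * (2⁻¹ : ℝ≥0∞) ^ (k+1) ∧
      ∃ δ > (0:ℝ), ∀ x ∈ M, ∀ y ∈ M, dist x y ≤ δ →
        rhoFK T x y ≤ 4 * (1/(4*((k:ℝ)+1))) := by
    intro k
    have hε : (0:ℝ) < 1/(4*((k:ℝ)+1)) := by positivity
    obtain ⟨m, hm⟩ := ae_ball_pos μ hT hμ (hne _ hε)
    have hF := exists_finset_cover μ hT hε hm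
    have hηne : (ENNReal.ofReal τ * (2⁻¹:ℝ≥0∞) ^ (k+1)) ≠ 0 := by
      apply mul_ne_zero
      · simpa [ENNReal.ofReal_eq_zero] using hτ
      · exact pow_ne_zero _ (by simp)
    exact exists_compact_piece μ hT hηne hF
  choose Mk hMkcomp hMkmeas hMkdelta using hcomp
  set M := ⋂ k, Mk k with hM
  have hMcomp : IsCompact M :=
    (isClosed_iInter fun k => (hMkcomp k).isClosed).isCompact
  refine ⟨M, hMcomp, ?_, ?_⟩
  · -- measure estimate
    have hsum : (∑' k : ℕ, (2⁻¹:ℝ≥0∞) ^ (k+1)) = 1 := by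
      have h1 : (fun k : ℕ => (2⁻¹:ℝ≥0∞) ^ (k+1)) = fun k => (2⁻¹:ℝ≥0∞) ^ k * 2⁻¹ :=
        funext fun k => pow_succ _ _
      rw [h1, ENNReal.tsum_mul_right, ENNReal.tsum_geometric,
        ENNReal.one_sub_inv_two, inv_inv]
      exact ENNReal.mul_inv_cancel (by norm_num) (by norm_num)
    have hcompl : μ Mᶜ ≤ ENNReal.ofReal τ := by
      have h1 : Mᶜ = ⋃ k, (Mk k)ᶜ := by
        rw [hM, Set.compl_iInter]
      calc μ Mᶜ = μ (⋃ k, (Mk k)ᶜ) := by rw [h1]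
        _ ≤ ∑' k, μ (Mk k)ᶜ := measure_iUnion_le _
        _ ≤ ∑' k, ENNReal.ofReal τ * (2⁻¹:ℝ≥0∞) ^ (k+1) :=
            ENNReal.tsum_le_tsum fun k => hMkmeas k
        _ = ENNReal.ofReal τ * ∑' k, (2⁻¹:ℝ≥0∞) ^ (k+1) := ENNReal.tsum_mul_left
        _ = ENNReal.ofReal τ := by rw [hsum, mul_one]
    have h2 : (1:ℝ≥0∞) ≤ μ M + ENNReal.ofReal τ := by
      have h3 : μ M + μ Mᶜ = 1 := by
        rw [measure_add_measure_compl hMcomp.isClosed.measurableSet]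
        exact measure_univ
      calc (1:ℝ≥0∞) = μ M + μ Mᶜ := h3.symm
        _ ≤ μ M + ENNReal.ofReal τ := add_le_add le_rfl hcompl
    calc ENNReal.ofReal (1 - τ) = 1 - ENNReal.ofReal τ := by
          rw [ENNReal.ofReal_sub 1 hτ.le, ENNReal.ofReal_one]
      _ ≤ μ M := tsub_le_iff_right.2 h2
  · intro ε hε
    obtain ⟨k, hk⟩ := exists_nat_gt (1/ε)
    obtain ⟨δ, hδ, hprop⟩ := hMkdelta k
    refine ⟨δ, hδ, fun x hx y hy hdist => ?_⟩
    have hx' : x ∈ Mk k := Set.mem_iInter.1 hx k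
    have hy' : y ∈ Mk k := Set.mem_iInter.1 hy k
    have h1 := hprop x hx' y hy' hdist
    have h2 : 4 * (1/(4*((k:ℝ)+1))) ≤ ε := by
      have hk1 : (1:ℝ)/ε < (k:ℝ) + 1 := lt_of_lt_of_le hk (by linarith)
      have hkpos : (0:ℝ) < (k:ℝ) + 1 := by positivity
      have h3 : 4 * (1/(4*((k:ℝ)+1))) = 1/((k:ℝ)+1) := by
        field_simp
      rw [h3]
      rw [div_le_iff₀ hkpos]
      rw [div_lt_iff₀ hε] at hk1
      linarith
    linarith

end FKPaper

open FKPaper Filter Topology MeasureTheory Set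
open scoped ENNReal

/-- equivalence of `μ`-FK-sensitivity, `μ`-FK-expansivity,
a.e. null FK-balls, and failure of `μ`-FK-continuity. -/
theorem muFKSensitive_tfae {X : Type*} [MetricSpace X] [CompactSpace X] [Nonempty X]
    (T : X → X) (hT : Continuous T) [MeasurableSpace X] [BorelSpace X]
    (μ : Measure X) [IsProbabilityMeasure μ] (hμ : Ergodic T μ) :
    List.TFAE
      [MuFKSensitive T μ,
       MuFKExpansive T μ,
       ∃ ε > (0 : ℝ), ∀ᵐ x ∂μ, μ {y : X | rhoFK T x y ≤ ε} = 0,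
       ¬ MuFKContinuous T μ] := by
  have hEmeas : ∀ ε : ℝ, MeasurableSet {p : X × X | rhoFK T p.1 p.2 ≤ ε} :=
    fun ε => (measurable_rhoFK hT) measurableSet_Iic
  have hphi : ∀ ε : ℝ, Measurable (fun x : X => μ {y : X | rhoFK T x y ≤ ε}) :=
    fun ε => measurable_FKball_measure hT
  tfae_have 3 → 2 := by
    rintro ⟨ε, hε, hae⟩
    refine ⟨ε, hε, ?_⟩
    have hprod : (μ.prod μ) {p : X × X | rhoFK T p.1 p.2 ≤ ε} = 0 := by
      rw [Measure.prod_apply (hEmeas ε)]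
      simp only [show ∀ x : X, Prod.mk x ⁻¹' {p : X × X | rhoFK T p.1 p.2 ≤ ε}
        = {y : X | rhoFK T x y ≤ ε} from fun _ => rfl]
      rw [lintegral_eq_zero_iff (hphi ε)]
      filter_upwards [hae] with x hx
      exact hx
    have hcompl : {p : X × X | ε < rhoFK T p.1 p.2}
        = {p : X × X | rhoFK T p.1 p.2 ≤ ε}ᶜ := by
      ext p; simp [not_le]
    rw [hcompl, prob_compl_eq_one_sub (hEmeas ε), hprod, tsub_zero]
  tfae_have 2 → 3 := by
    rintro ⟨ε, hε, h1⟩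
    refine ⟨ε, hε, ?_⟩
    have hcompl : {p : X × X | ε < rhoFK T p.1 p.2}
        = {p : X × X | rhoFK T p.1 p.2 ≤ ε}ᶜ := by
      ext p; simp [not_le]
    rw [hcompl, prob_compl_eq_one_sub (hEmeas ε)] at h1
    have hE0 : (μ.prod μ) {p : X × X | rhoFK T p.1 p.2 ≤ ε} = 0 := by
      have hle : (μ.prod μ) {p : X × X | rhoFK T p.1 p.2 ≤ ε} ≤ 1 := prob_le_one
      rcases eq_or_ne ((μ.prod μ) {p : X × X | rhoFK T p.1 p.2 ≤ ε}) 0 with h | h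
      · exact h
      · exfalso
        have hpos : 0 < (μ.prod μ) {p : X × X | rhoFK T p.1 p.2 ≤ ε} := pos_iff_ne_zero.2 h
        have := ENNReal.sub_lt_self (by norm_num : (1:ℝ≥0∞) ≠ ⊤) (by norm_num) h
        rw [h1] at this
        exact lt_irrefl _ this
    rw [Measure.prod_apply (hEmeas ε)] at hE0
    simp only [show ∀ x : X, Prod.mk x ⁻¹' {p : X × X | rhoFK T p.1 p.2 ≤ ε}
      = {y : X | rhoFK T x y ≤ ε} from fun _ => rfl] at hE0
    rw [lintegral_eq_zero_iff (hphi ε)] at hE0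
    filter_upwards [hE0] with x hx
    exact hx
  tfae_have 3 → 1 := by
    rintro ⟨ε, hε, hae⟩
    refine ⟨ε, hε, fun A hA hApos => ?_⟩
    have hG : μ {x : X | ¬ μ {y : X | rhoFK T x y ≤ ε} = 0} = 0 := by
      rw [← ae_iff]; exact hae
    have h1 : μ (A \ {x : X | ¬ μ {y : X | rhoFK T x y ≤ ε} = 0}) = μ A :=
      measure_diff_null hG
    have h2 : (A \ {x : X | ¬ μ {y : X | rhoFK T x y ≤ ε} = 0}).Nonempty := by
      apply nonempty_of_measure_ne_zero (μ := μ)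
      rw [h1]
      exact hApos.ne'
    obtain ⟨x, hxA, hxG⟩ := h2
    have hBx : μ {y : X | rhoFK T x y ≤ ε} = 0 := by
      by_contra h
      exact hxG h
    have h3 : μ (A \ {y : X | rhoFK T x y ≤ ε}) = μ A := measure_diff_null hBx
    have h4 : (A \ {y : X | rhoFK T x y ≤ ε}).Nonempty := by
      apply nonempty_of_measure_ne_zero (μ := μ)
      rw [h3]
      exact hApos.ne'
    obtain ⟨y, hyA, hyB⟩ := h4
    exact ⟨x, hxA, y, hyA, not_le.1 hyB⟩
  tfae_have 1 → 3 := by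
    rintro ⟨ε₀, hε₀, hsen⟩
    by_contra h3
    push_neg at h3
    have hε3 : (0:ℝ) < ε₀ / 3 := by linarith
    have hne := h3 (ε₀ / 3) hε3
    have hex : ∃ x₀ : X, μ {y : X | rhoFK T x₀ y ≤ ε₀ / 3} ≠ 0 := by
      by_contra hall
      push_neg at hall
      exact hne (Filter.Eventually.of_forall fun x => not_not.2 (hall x))
    obtain ⟨x₀, hx₀⟩ := hex
    obtain ⟨x, hx, y, hy, hxy⟩ := hsen {y : X | rhoFK T x₀ y ≤ ε₀ / 3}
      (measurableSet_FKball hT x₀) (pos_iff_ne_zero.2 hx₀)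
    have h1 : rhoFK T x y ≤ rhoFK T x x₀ + rhoFK T x₀ y := rhoFK_triangle
    have h2 : rhoFK T x x₀ = rhoFK T x₀ x := rhoFK_symm
    have hx' : rhoFK T x₀ x ≤ ε₀ / 3 := hx
    have hy' : rhoFK T x₀ y ≤ ε₀ / 3 := hy
    rw [h2] at h1
    linarith
  tfae_have 3 → 4 := by
    rintro ⟨ε, hε, hae⟩ hcont
    obtain ⟨M, hMc, hMμ, hMδ⟩ := hcont (1/2) (by norm_num)
    obtain ⟨δ, hδ, hδprop⟩ := hMδ ε hε
    have hMpos : μ M ≠ 0 := by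
      intro h0
      rw [h0] at hMμ
      simp only [nonpos_iff_eq_zero, ENNReal.ofReal_eq_zero] at hMμ
      norm_num at hMμ
    obtain ⟨t, htM, hcover⟩ := hMc.elim_nhds_subcover (fun x => Metric.ball x (δ/2))
      (fun x _ => Metric.ball_mem_nhds x (by linarith))
    have hex : ∃ x₀ ∈ t, μ (M ∩ Metric.ball x₀ (δ/2)) ≠ 0 := by
      by_contra hall
      push_neg at hall
      apply hMpos
      have h1 : M ⊆ ⋃ x ∈ t, (M ∩ Metric.ball x (δ/2)) := by
        intro z hz
        obtain ⟨x, hxt, hzx⟩ := Set.mem_iUnion₂.1 (hcover hz)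
        exact Set.mem_iUnion₂.2 ⟨x, hxt, hz, hzx⟩
      have h2 : μ M ≤ ∑ x ∈ t, μ (M ∩ Metric.ball x (δ/2)) :=
        le_trans (measure_mono h1) (measure_biUnion_finset_le t _)
      have h3 : ∑ x ∈ t, μ (M ∩ Metric.ball x (δ/2)) = 0 :=
        Finset.sum_eq_zero fun x hx => hall x hx
      rw [h3] at h2
      exact le_antisymm h2 zero_le
    obtain ⟨x₀, hx₀t, hP⟩ := hex
    set P := M ∩ Metric.ball x₀ (δ/2) with hPdef
    have hPpair : ∀ a ∈ P, ∀ b ∈ P, rhoFK T a b ≤ ε := by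
      intro a ha b hb
      apply hδprop a ha.1 b hb.1
      have h1 : dist a x₀ < δ/2 := ha.2
      have h2 : dist b x₀ < δ/2 := hb.2
      calc dist a b ≤ dist a x₀ + dist x₀ b := dist_triangle _ _ _
        _ = dist a x₀ + dist b x₀ := by rw [dist_comm x₀ b]
        _ ≤ δ := by linarith
    have hG : μ {x : X | ¬ μ {y : X | rhoFK T x y ≤ ε} = 0} = 0 := by
      rw [← ae_iff]; exact hae
    have h4 : (P \ {x : X | ¬ μ {y : X | rhoFK T x y ≤ ε} = 0}).Nonempty := by
      apply nonempty_of_measure_ne_zero (μ := μ)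
      rw [measure_diff_null hG]
      exact hP
    obtain ⟨x₁, hx₁P, hx₁G⟩ := h4
    have hBx₁ : μ {y : X | rhoFK T x₁ y ≤ ε} = 0 := by
      by_contra h
      exact hx₁G h
    have hsub : P ⊆ {y : X | rhoFK T x₁ y ≤ ε} := fun z hz => hPpair x₁ hx₁P z hz
    exact hP (le_antisymm (le_trans (measure_mono hsub) hBx₁.le) zero_le)
  tfae_have 4 → 3 := by
    intro h4
    by_contra h3
    push_neg at h3
    exact h4 (muFKContinuous_of_not μ hT hμ fun ε hε hall => h3 ε hε (hall.mono fun x hx => not_not.2 hx))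
  tfae_finish
end

section
/- Let (X,T) be a TDS and μ a T-invariant ergodic Borel probability measure on X, and suppose there exists a Borel set M ⊆ X with μ(M) = 1 such that ρ_FK(x,y) = 0 for every x,y ∈ M. Then for every k ≥ 1, every finite Borel partition P = {P_0,…,P_{k−1}} of X, and every ε > 0, there exists N ∈ ℕ such that for every n ≥ N there is a word w ∈ {0,…,k−1}^n with μ({x ∈ X : f̄_n(w, P^n(x)) < ε}) ≥ 1 − ε. -/
open Filter Topology MeasureTheory Set

namespace FKPaper

variable {X : Type*} [MetricSpace X]

/-- Largest `ℓ` such that the words `u` and `w` admit a common subsequence of length `ℓ`. -/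
noncomputable def maxCommon {A : Type*} (n : ℕ) (u w : Fin n → A) : ℕ :=
  sSup {ℓ : ℕ | ∃ i : Fin ℓ → Fin n, ∃ j : Fin ℓ → Fin n, StrictMono i ∧ StrictMono j ∧
      ∀ s, u (i s) = w (j s)}

/-- The edit distance `f̄_n(u,w) = 1 - (length of longest common subsequence)/n`. -/
noncomputable def editDist {A : Type*} (n : ℕ) (u w : Fin n → A) : ℝ :=
  1 - (maxCommon n u w : ℝ) / n

/-- The `P`-`n`-name of a point `x`, for an ordered Borel partition into `k` atoms
identified with a map `P : X → Fin k`. -/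
def pName (T : X → X) {k : ℕ} (P : X → Fin k) (n : ℕ) (x : X) : Fin n → Fin k :=
  fun j => P (T^[(j : ℕ)] x)

end FKPaper

namespace FKProof
open FKPaper Filter Topology MeasureTheory Set
open scoped ENNReal

variable {X : Type*} [MetricSpace X]

def matchSet (T : X → X) (δ : ℝ) (n : ℕ) (x z : X) : Set ℕ :=
  {k : ℕ | ∃ i j : Fin k → ℕ, StrictMono i ∧ StrictMono j ∧
    (∀ s, i s < n) ∧ (∀ s, j s < n) ∧ ∀ s, dist (T^[i s] x) (T^[j s] z) < δ}

lemma maxFit_eq (T : X → X) (δ : ℝ) (n : ℕ) (x z : X) :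
    maxFit T δ n x z = sSup (matchSet T δ n x z) := rfl

lemma zero_mem_matchSet (T : X → X) (δ : ℝ) (n : ℕ) (x z : X) :
    0 ∈ matchSet T δ n x z := by
  refine ⟨Fin.elim0, Fin.elim0, ?_, ?_, ?_, ?_, ?_⟩ <;> intro s <;> exact s.elim0

lemma mem_matchSet_le {T : X → X} {δ : ℝ} {n : ℕ} {x z : X} {m : ℕ}
    (hm : m ∈ matchSet T δ n x z) : m ≤ n := by
  obtain ⟨i, j, hi, hj, hin, hjn, hd⟩ := hm
  have : Function.Injective (fun s : Fin m => (⟨i s, hin s⟩ : Fin n)) := by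
    intro a b hab
    exact hi.injective (by simpa [Fin.ext_iff] using hab)
  simpa using Fintype.card_le_of_injective _ this

lemma matchSet_bddAbove (T : X → X) (δ : ℝ) (n : ℕ) (x z : X) :
    BddAbove (matchSet T δ n x z) := ⟨n, fun _ hm => mem_matchSet_le hm⟩

lemma maxFit_le (T : X → X) (δ : ℝ) (n : ℕ) (x z : X) : maxFit T δ n x z ≤ n :=
  csSup_le ⟨0, zero_mem_matchSet T δ n x z⟩ fun _ hm => mem_matchSet_le hm

lemma maxFit_mem (T : X → X) (δ : ℝ) (n : ℕ) (x z : X) :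
    maxFit T δ n x z ∈ matchSet T δ n x z :=
  Nat.sSup_mem ⟨0, zero_mem_matchSet T δ n x z⟩ (matchSet_bddAbove T δ n x z)

lemma matchSet_mono_delta {δ δ' : ℝ} (h : δ ≤ δ') (T : X → X) (n : ℕ) (x z : X) :
    matchSet T δ n x z ⊆ matchSet T δ' n x z := by
  rintro m ⟨i, j, hi, hj, hin, hjn, hd⟩
  exact ⟨i, j, hi, hj, hin, hjn, fun s => lt_of_lt_of_le (hd s) h⟩

lemma maxFit_mono_delta {δ δ' : ℝ} (h : δ ≤ δ') (T : X → X) (n : ℕ) (x z : X) :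
    maxFit T δ n x z ≤ maxFit T δ' n x z :=
  csSup_le_csSup (matchSet_bddAbove T δ' n x z) ⟨0, zero_mem_matchSet T δ n x z⟩
    (matchSet_mono_delta h T n x z)

lemma le_maxFit_iff {T : X → X} {δ : ℝ} {n : ℕ} {x z : X} {r : ℕ} :
    r ≤ maxFit T δ n x z ↔ r ∈ matchSet T δ n x z := by
  constructor
  · intro hr
    obtain ⟨i, j, hi, hj, hin, hjn, hd⟩ := maxFit_mem T δ n x z
    refine ⟨i ∘ Fin.castLE hr, j ∘ Fin.castLE hr, ?_, ?_, fun s => hin _, fun s => hjn _,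
      fun s => hd _⟩
    · exact hi.comp (Fin.strictMono_castLE hr)
    · exact hj.comp (Fin.strictMono_castLE hr)
  · intro hr
    exact le_csSup (matchSet_bddAbove T δ n x z) hr

lemma fbarN_nonneg (T : X → X) (δ : ℝ) (n : ℕ) (x z : X) : 0 ≤ fbarN T δ n x z := by
  rcases Nat.eq_zero_or_pos n with h | h
  · simp [fbarN, h]
  · have h1 : (maxFit T δ n x z : ℝ) / n ≤ 1 := by
      rw [div_le_one (by exact_mod_cast h)]
      exact_mod_cast maxFit_le T δ n x z
    simp [fbarN]; linarith

lemma fbarN_le_one (T : X → X) (δ : ℝ) (n : ℕ) (x z : X) : fbarN T δ n x z ≤ 1 := by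
  have : (0:ℝ) ≤ (maxFit T δ n x z : ℝ) / n := by positivity
  simp [fbarN]; linarith

lemma fbarN_anti {δ δ' : ℝ} (h : δ ≤ δ') (T : X → X) (n : ℕ) (x z : X) :
    fbarN T δ' n x z ≤ fbarN T δ n x z := by
  have h1 : (maxFit T δ n x z : ℝ) ≤ (maxFit T δ' n x z : ℝ) := by
    exact_mod_cast maxFit_mono_delta h T n x z
  have h2 : (maxFit T δ n x z : ℝ) / n ≤ (maxFit T δ' n x z : ℝ) / n := by
    gcongr
  simp only [fbarN]; linarith

lemma fbar_le_one (T : X → X) (δ : ℝ) (x z : X) : fbar T δ x z ≤ 1 := by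
  apply Filter.limsup_le_of_le
  · exact Filter.isCoboundedUnder_le_of_le Filter.atTop fun n => fbarN_nonneg T δ n x z
  · exact Filter.Eventually.of_forall fun n => fbarN_le_one T δ n x z

lemma fbar_anti {δ δ' : ℝ} (h : δ ≤ δ') (T : X → X) (x z : X) :
    fbar T δ' x z ≤ fbar T δ x z := by
  exact Filter.limsup_le_limsup (Filter.Eventually.of_forall fun n => fbarN_anti h T n x z)
    (Filter.isCoboundedUnder_le_of_le Filter.atTop fun n => fbarN_nonneg T δ' n x z)
    ⟨1, Filter.eventually_map.2 (Filter.Eventually.of_forall fun n => fbarN_le_one T δ n x z)⟩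

lemma fbar_lt_of_rhoFK_eq_zero {T : X → X} {x z : X} (h : rhoFK T x z = 0)
    {δ : ℝ} (hδ : 0 < δ) : fbar T δ x z < δ := by
  have hne : ((2:ℝ)) ∈ {δ : ℝ | 0 < δ ∧ fbar T δ x z < δ} :=
    ⟨by norm_num, lt_of_le_of_lt (fbar_le_one T 2 x z) (by norm_num)⟩
  have hbdd : BddBelow {δ : ℝ | 0 < δ ∧ fbar T δ x z < δ} :=
    ⟨0, fun a ha => ha.1.le⟩
  have : sInf {δ : ℝ | 0 < δ ∧ fbar T δ x z < δ} < δ := by rw [← rhoFK]; rw [h]; exact hδ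
  obtain ⟨a, ⟨ha0, hfa⟩, haδ⟩ := (csInf_lt_iff hbdd ⟨2, hne⟩).1 this
  exact lt_of_le_of_lt (fbar_anti haδ.le T x z) (lt_of_lt_of_le hfa haδ.le)

lemma eventually_fbarN_lt {T : X → X} {x z : X} {δ : ℝ} (h : fbar T δ x z < δ) :
    ∀ᶠ n in Filter.atTop, fbarN T δ n x z < δ :=
  Filter.eventually_lt_of_limsup_lt h
    ⟨1, Filter.eventually_map.2 (Filter.Eventually.of_forall fun n => fbarN_le_one T δ n x z)⟩
variable {X : Type*} [MetricSpace X]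

open scoped Classical in
lemma le_maxCommon {A : Type*} {n : ℕ} {u w : Fin n → A} {m : ℕ}
    (hm : m ∈ {ℓ : ℕ | ∃ i : Fin ℓ → Fin n, ∃ j : Fin ℓ → Fin n, StrictMono i ∧ StrictMono j ∧
      ∀ s, u (i s) = w (j s)}) : m ≤ maxCommon n u w := by
  apply le_csSup ?_ hm
  refine ⟨n, fun ℓ hℓ => ?_⟩
  obtain ⟨i, _, hi, _, _⟩ := hℓ
  simpa using Fintype.card_le_of_injective i hi.injective

open scoped Classical in
lemma comb {k : ℕ} (T : X → X) (P : X → Fin k) (K : Set X) {δ γ : ℝ} {n : ℕ}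
    (hsep : ∀ a ∈ K, ∀ b ∈ K, dist a b < δ → P a = P b)
    (y x : X) (hn : 0 < n)
    (hfb : fbarN T δ n y x < δ)
    (hy : (((Finset.range n).filter (fun m => T^[m] y ∉ K)).card : ℝ) ≤ γ * n)
    (hx : (((Finset.range n).filter (fun m => T^[m] x ∉ K)).card : ℝ) ≤ γ * n) :
    editDist n (pName T P n y) (pName T P n x) < δ + 2 * γ := by
  classical
  set r := maxFit T δ n y x with hr
  obtain ⟨i, j, hi, hj, hin, hjn, hd⟩ := maxFit_mem T δ n y x
  have hnR : (0:ℝ) < n := by exact_mod_cast hn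
  have hrn : (1 - δ) * n < (r : ℝ) := by
    have h1 : 1 - (r:ℝ)/n < δ := hfb
    have h2 : 1 - δ < (r:ℝ)/n := by linarith
    calc (1 - δ) * n < ((r:ℝ)/n) * n := by exact mul_lt_mul_of_pos_right h2 hnR
    _ = r := by field_simp
  set S : Finset (Fin r) := Finset.univ.filter (fun s => T^[i s] y ∈ K ∧ T^[j s] x ∈ K) with hS
  have hSy : ((Finset.univ.filter (fun s : Fin r => T^[i s] y ∉ K)).card : ℝ) ≤ γ * n := by
    refine le_trans ?_ hy
    have hcard : (Finset.univ.filter (fun s : Fin r => T^[i s] y ∉ K)).card ≤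
        ((Finset.range n).filter (fun m => T^[m] y ∉ K)).card := by
      apply Finset.card_le_card_of_injOn i
      · intro s hs
        simp only [Finset.mem_coe, Finset.mem_filter, Finset.mem_univ, true_and, Finset.mem_range] at hs ⊢
        exact ⟨hin s, hs⟩
      · intro a _ b _ hab; exact hi.injective hab
    exact_mod_cast hcard
  have hSx : ((Finset.univ.filter (fun s : Fin r => T^[j s] x ∉ K)).card : ℝ) ≤ γ * n := by
    refine le_trans ?_ hx
    have hcard : (Finset.univ.filter (fun s : Fin r => T^[j s] x ∉ K)).card ≤
        ((Finset.range n).filter (fun m => T^[m] x ∉ K)).card := by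
      apply Finset.card_le_card_of_injOn j
      · intro s hs
        simp only [Finset.mem_coe, Finset.mem_filter, Finset.mem_univ, true_and, Finset.mem_range] at hs ⊢
        exact ⟨hjn s, hs⟩
      · intro a _ b _ hab; exact hj.injective hab
    exact_mod_cast hcard
  have hsplit : S.card + (Finset.univ.filter (fun s : Fin r =>
      ¬(T^[i s] y ∈ K ∧ T^[j s] x ∈ K))).card = r := by
    rw [hS, Finset.card_filter_add_card_filter_not]
    simp
  have hcompl : ((Finset.univ.filter (fun s : Fin r =>
      ¬(T^[i s] y ∈ K ∧ T^[j s] x ∈ K))).card : ℝ) ≤ 2 * (γ * n) := by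
    have hsub : (Finset.univ.filter (fun s : Fin r => ¬(T^[i s] y ∈ K ∧ T^[j s] x ∈ K))) ⊆
        (Finset.univ.filter (fun s : Fin r => T^[i s] y ∉ K)) ∪
        (Finset.univ.filter (fun s : Fin r => T^[j s] x ∉ K)) := by
      intro s hs
      simp only [Finset.mem_filter, Finset.mem_univ, true_and, Finset.mem_union] at hs ⊢
      tauto
    have h1 := Finset.card_le_card hsub
    have h2 := Finset.card_union_le (Finset.univ.filter (fun s : Fin r => T^[i s] y ∉ K))
        (Finset.univ.filter (fun s : Fin r => T^[j s] x ∉ K))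
    have h3 : ((Finset.univ.filter (fun s : Fin r =>
        ¬(T^[i s] y ∈ K ∧ T^[j s] x ∈ K))).card : ℝ) ≤
        ((Finset.univ.filter (fun s : Fin r => T^[i s] y ∉ K)).card : ℝ) +
        ((Finset.univ.filter (fun s : Fin r => T^[j s] x ∉ K)).card : ℝ) := by
      exact_mod_cast le_trans h1 h2
    linarith
  have hScard : (r : ℝ) - 2 * (γ * n) ≤ (S.card : ℝ) := by
    have : (S.card : ℝ) + ((Finset.univ.filter (fun s : Fin r =>
        ¬(T^[i s] y ∈ K ∧ T^[j s] x ∈ K))).card : ℝ) = r := by exact_mod_cast hsplit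
    linarith
  -- build common subsequence
  have hmem : S.card ∈ {ℓ : ℕ | ∃ i1 : Fin ℓ → Fin n, ∃ j1 : Fin ℓ → Fin n,
      StrictMono i1 ∧ StrictMono j1 ∧ ∀ s, pName T P n y (i1 s) = pName T P n x (j1 s)} := by
    set e := S.orderEmbOfFin rfl with he
    refine ⟨fun s => ⟨i (e s), hin _⟩, fun s => ⟨j (e s), hjn _⟩, ?_, ?_, ?_⟩
    · intro a b hab
      exact hi (e.strictMono hab)
    · intro a b hab
      exact hj (e.strictMono hab)
    · intro s
      have hes : e s ∈ S := Finset.orderEmbOfFin_mem S rfl s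
      simp only [hS, Finset.mem_filter] at hes
      exact hsep _ hes.2.1 _ hes.2.2 (hd (e s))
  have hmc : (S.card : ℝ) ≤ (maxCommon n (pName T P n y) (pName T P n x) : ℝ) := by
    exact_mod_cast le_maxCommon hmem
  have hfinal : (1 - (δ + 2*γ)) * n < (maxCommon n (pName T P n y) (pName T P n x) : ℝ) := by
    nlinarith
  rw [editDist, sub_lt_iff_lt_add]
  have := (lt_div_iff₀ hnR).2 hfinal
  linarith [this]
open scoped ENNReal

variable {X : Type*} [MetricSpace X]

lemma isOpen_le_maxFit (T : X → X) (hT : Continuous T) (δ : ℝ) (n r : ℕ) :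
    IsOpen {p : X × X | r ≤ maxFit T δ n p.1 p.2} := by
  have heq : {p : X × X | r ≤ maxFit T δ n p.1 p.2} =
      ⋃ (i : Fin r → ℕ) (j : Fin r → ℕ) (_ : StrictMono i) (_ : StrictMono j)
        (_ : ∀ s, i s < n) (_ : ∀ s, j s < n),
        ⋂ s : Fin r, {p : X × X | dist (T^[i s] p.1) (T^[j s] p.2) < δ} := by
    ext p
    simp only [mem_setOf_eq, mem_iUnion, mem_iInter, le_maxFit_iff]
    constructor
    · rintro ⟨i, j, hi, hj, hin, hjn, hd⟩
      exact ⟨i, j, hi, hj, hin, hjn, hd⟩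
    · rintro ⟨i, j, hi, hj, hin, hjn, hd⟩
      exact ⟨i, j, hi, hj, hin, hjn, hd⟩
  rw [heq]
  refine isOpen_iUnion fun i => isOpen_iUnion fun j => isOpen_iUnion fun _ =>
    isOpen_iUnion fun _ => isOpen_iUnion fun _ => isOpen_iUnion fun _ =>
    isOpen_iInter_of_finite fun s => ?_
  exact isOpen_lt (Continuous.dist ((hT.iterate _).comp continuous_fst)
    ((hT.iterate _).comp continuous_snd)) continuous_const

lemma isOpen_fbarN_lt (T : X → X) (hT : Continuous T) (δ : ℝ) {n : ℕ} (hn : 0 < n) :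
    IsOpen {p : X × X | fbarN T δ n p.1 p.2 < δ} := by
  have hnR : (0:ℝ) < n := by exact_mod_cast hn
  have heq : {p : X × X | fbarN T δ n p.1 p.2 < δ} =
      ⋃ (r : ℕ) (_ : (1 - δ) * n < (r:ℝ)), {p : X × X | r ≤ maxFit T δ n p.1 p.2} := by
    ext p
    simp only [mem_setOf_eq, mem_iUnion]
    constructor
    · intro h
      refine ⟨maxFit T δ n p.1 p.2, ?_, le_refl _⟩
      have h1 : 1 - (maxFit T δ n p.1 p.2 : ℝ)/n < δ := h
      have h2 : 1 - δ < (maxFit T δ n p.1 p.2:ℝ)/n := by linarith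
      calc (1 - δ) * n < ((maxFit T δ n p.1 p.2:ℝ)/n) * n := mul_lt_mul_of_pos_right h2 hnR
      _ = _ := by field_simp
    · rintro ⟨r, hr, hrm⟩
      have h1 : (1 - δ) * n < (maxFit T δ n p.1 p.2 : ℝ) := by
        refine lt_of_lt_of_le hr ?_
        exact_mod_cast hrm
      show 1 - (maxFit T δ n p.1 p.2 : ℝ)/n < δ
      have h2 : 1 - δ < (maxFit T δ n p.1 p.2 : ℝ)/n := by
        rw [lt_div_iff₀ hnR]; linarith
      linarith
  rw [heq]
  exact isOpen_iUnion fun r => isOpen_iUnion fun _ => isOpen_le_maxFit T hT δ n r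

variable [MeasurableSpace X] [BorelSpace X]

lemma measurable_pName (T : X → X) (hT : Continuous T) {k : ℕ} (P : X → Fin k)
    (hP : Measurable P) (n : ℕ) : Measurable (FKPaper.pName T P n) :=
  measurable_pi_lambda _ fun j => hP.comp ((hT.iterate (j:ℕ)).measurable)

open scoped Classical in
lemma measurable_badcount (T : X → X) (hT : Continuous T) (K : Set X) (hK : MeasurableSet K)
    (n : ℕ) :
    Measurable (fun x => (((Finset.range n).filter (fun i => T^[i] x ∉ K)).card : ℝ)) := by
  have h1 : Measurable (fun x => ((Finset.range n).filter (fun i => T^[i] x ∉ K)).card) := by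
    have : (fun x => ((Finset.range n).filter (fun i => T^[i] x ∉ K)).card) =
        fun x => ∑ i ∈ Finset.range n, if T^[i] x ∉ K then 1 else 0 := by
      funext x; rw [Finset.card_filter]
    rw [this]
    refine Finset.measurable_sum _ fun i _ => Measurable.ite ?_ measurable_const measurable_const
    exact (hT.iterate i).measurable hK.compl
  exact (measurable_from_top).comp h1

open scoped Classical in
lemma markov_bad (T : X → X) (hT : Continuous T) (μ : Measure X) [IsProbabilityMeasure μ]
    (hpres : MeasurePreserving T μ μ) (K : Set X) (hK : MeasurableSet K)
    {γ c : ℝ} (hγ : 0 < γ) (hc : μ Kᶜ ≤ ENNReal.ofReal (γ * c)) {n : ℕ} (hn : 0 < n) :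
    μ {x | ¬ ((((Finset.range n).filter (fun i => T^[i] x ∉ K)).card : ℝ) ≤ γ * n)} ≤
      ENNReal.ofReal c := by
  classical
  set g : X → ℝ≥0∞ := fun x => ∑ i ∈ Finset.range n,
    (Kᶜ).indicator (fun _ => (1:ℝ≥0∞)) (T^[i] x) with hg
  have hgmeas : Measurable g := by
    refine Finset.measurable_sum _ fun i _ => ?_
    exact ((measurable_const.indicator hK.compl)).comp (hT.iterate i).measurable
  have hgF : ∀ x, g x = (((Finset.range n).filter (fun i => T^[i] x ∉ K)).card : ℝ≥0∞) := by
    intro x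
    rw [hg, Finset.card_filter]
    push_cast
    refine Finset.sum_congr rfl fun i _ => ?_
    by_cases h : T^[i] x ∈ K <;> simp [Set.indicator_apply, h]
  have hint : ∫⁻ x, g x ∂μ = n * μ Kᶜ := by
    have hf : ∀ i ∈ Finset.range n,
        Measurable fun x => (Kᶜ).indicator (fun _ => (1:ℝ≥0∞)) (T^[i] x) :=
      fun i _ => ((measurable_const.indicator hK.compl)).comp (hT.iterate i).measurable
    show ∫⁻ x, ∑ i ∈ Finset.range n, (Kᶜ).indicator (fun _ => (1:ℝ≥0∞)) (T^[i] x) ∂μ = n * μ Kᶜ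
    rw [MeasureTheory.lintegral_finset_sum _ hf]
    have : ∀ i ∈ Finset.range n,
        ∫⁻ x, (Kᶜ).indicator (fun _ => (1:ℝ≥0∞)) (T^[i] x) ∂μ = μ Kᶜ := by
      intro i _
      rw [(hpres.iterate i).lintegral_comp (measurable_const.indicator hK.compl)]
      simp [MeasureTheory.lintegral_indicator, hK.compl]
    rw [Finset.sum_congr rfl this]
    simp [mul_comm]
  have hsub : {x | ¬ ((((Finset.range n).filter (fun i => T^[i] x ∉ K)).card : ℝ) ≤ γ * n)} ⊆
      {x | ENNReal.ofReal (γ * n) ≤ g x} := by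
    intro x hx
    simp only [mem_setOf_eq, not_le] at hx
    rw [mem_setOf_eq, hgF]
    calc ENNReal.ofReal (γ * n) ≤
        ENNReal.ofReal (((Finset.range n).filter (fun i => T^[i] x ∉ K)).card : ℝ) :=
          ENNReal.ofReal_le_ofReal hx.le
    _ = _ := ENNReal.ofReal_natCast _
  have hmarkov := mul_meas_ge_le_lintegral₀ (μ := μ) hgmeas.aemeasurable (ENNReal.ofReal (γ * n))
  have hnR : (0:ℝ) < n := by exact_mod_cast hn
  have key : ENNReal.ofReal (γ * n) * μ {x | ¬ ((((Finset.range n).filter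
      (fun i => T^[i] x ∉ K)).card : ℝ) ≤ γ * n)} ≤ ENNReal.ofReal (γ * n) * ENNReal.ofReal c := by
    refine le_trans (mul_le_mul_right (measure_mono hsub) _) (le_trans hmarkov ?_)
    rw [hint]
    refine le_trans (mul_le_mul_right hc _) (le_of_eq ?_)
    rw [← ENNReal.ofReal_natCast n, ← ENNReal.ofReal_mul (by positivity),
      ← ENNReal.ofReal_mul (by positivity)]
    ring_nf
  have h0 : ENNReal.ofReal (γ * n) ≠ 0 := by
    simp only [ne_eq, ENNReal.ofReal_eq_zero, not_le]
    positivity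
  exact (ENNReal.mul_le_mul_iff_right h0 ENNReal.ofReal_ne_top).1 key

open scoped ENNReal in
lemma exists_compact_partition [CompactSpace X]
    (μ : MeasureTheory.Measure X) [MeasureTheory.IsProbabilityMeasure μ] {k : ℕ} (hk : 1 ≤ k)
    (P : X → Fin k) (hP : Measurable P) {c : ℝ} (hc : 0 < c) :
    ∃ K : Set X, IsClosed K ∧ μ Kᶜ ≤ ENNReal.ofReal c ∧
      ∃ δ0 : ℝ, 0 < δ0 ∧ ∀ a ∈ K, ∀ b ∈ K, dist a b < δ0 → P a = P b := by
  classical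
  have hA : ∀ j : Fin k, MeasurableSet (P ⁻¹' {j}) := fun j => hP (measurableSet_singleton j)
  have hex : ∀ j : Fin k, ∃ Kc ⊆ P ⁻¹' {j}, IsCompact Kc ∧
      μ ((P ⁻¹' {j}) \ Kc) < ENNReal.ofReal (c / k) := by
    intro j
    exact (hA j).exists_isCompact_diff_lt (MeasureTheory.measure_ne_top μ _)
      (by simp only [ne_eq, ENNReal.ofReal_eq_zero, not_le]; positivity)
  choose Kc hKsub hKcomp hKdiff using hex
  refine ⟨⋃ j, Kc j, isClosed_iUnion_of_finite fun j => (hKcomp j).isClosed, ?_, ?_⟩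
  · have hsub : (⋃ j, Kc j)ᶜ ⊆ ⋃ j, ((P ⁻¹' {j}) \ Kc j) := by
      intro x hx
      refine Set.mem_iUnion.2 ⟨P x, ⟨rfl, fun hxK => hx (Set.mem_iUnion.2 ⟨P x, hxK⟩)⟩⟩
    refine le_trans (MeasureTheory.measure_mono hsub) ?_
    refine le_trans (MeasureTheory.measure_iUnion_le _) ?_
    have : ∀ j : Fin k, μ ((P ⁻¹' {j}) \ Kc j) ≤ ENNReal.ofReal (c / k) :=
      fun j => (hKdiff j).le
    calc ∑' j : Fin k, μ ((P ⁻¹' {j}) \ Kc j) ≤ ∑' _ : Fin k, ENNReal.ofReal (c / k) :=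
          ENNReal.tsum_le_tsum this
    _ = (k : ℝ≥0∞) * ENNReal.ofReal (c / k) := by
        rw [tsum_fintype]
        simp [Finset.sum_const, mul_comm]
    _ = ENNReal.ofReal c := by
        rw [← ENNReal.ofReal_natCast k, ← ENNReal.ofReal_mul (by positivity)]
        congr 1
        field_simp
  · have hdisj : ∀ p : Fin k × Fin k, p.1 ≠ p.2 → Disjoint (Kc p.1) (Kc p.2) := by
      intro p hp
      rw [Set.disjoint_left]
      intro a ha1 ha2
      have h1 : P a = p.1 := hKsub p.1 ha1
      have h2 : P a = p.2 := hKsub p.2 ha2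
      exact hp (h1 ▸ h2)
    have hex2 : ∀ p : Fin k × Fin k, ∃ d : ℝ, 0 < d ∧ (p.1 ≠ p.2 →
        Disjoint (Metric.thickening d (Kc p.1)) (Metric.thickening d (Kc p.2))) := by
      intro p
      by_cases hp : p.1 = p.2
      · exact ⟨1, one_pos, fun h => absurd hp h⟩
      · obtain ⟨d, hd0, hdd⟩ := (hdisj p hp).exists_thickenings (hKcomp p.1) (hKcomp p.2).isClosed
        exact ⟨d, hd0, fun _ => hdd⟩
    choose d hd0 hdd using hex2
    haveI : Nonempty (Fin k) := ⟨⟨0, hk⟩⟩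
    refine ⟨Finset.univ.inf' Finset.univ_nonempty d, ?_, ?_⟩
    · rw [Finset.lt_inf'_iff]
      exact fun p _ => hd0 p
    · intro a ha b hb hab
      obtain ⟨ja, hja⟩ := Set.mem_iUnion.1 ha
      obtain ⟨jb, hjb⟩ := Set.mem_iUnion.1 hb
      have hPa : P a = ja := hKsub ja hja
      have hPb : P b = jb := hKsub jb hjb
      by_cases hj : ja = jb
      · rw [hPa, hPb, hj]
      · exfalso
        have hlt : dist a b < d (ja, jb) := by
          refine lt_of_lt_of_le hab ?_
          exact Finset.inf'_le _ (Finset.mem_univ (ja, jb))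
        have hb1 : b ∈ Metric.thickening (d (ja, jb)) (Kc ja) :=
          Metric.mem_thickening_iff.2 ⟨a, hja, by rwa [dist_comm]⟩
        have hb2 : b ∈ Metric.thickening (d (ja, jb)) (Kc jb) :=
          Metric.mem_thickening_iff.2 ⟨b, hjb, by simpa using hd0 (ja, jb)⟩
        exact Set.disjoint_left.1 (hdd (ja, jb) hj) hb1 hb2

end FKProof

open FKPaper Filter Topology MeasureTheory Set
open scoped ENNReal

/-- if `ρ_FK` vanishes on a full-measure Borel set, then every finite
Borel partition satisfies Katok's criterion. -/
theorem katok_criterion_of_rhoFK_null {X : Type*} [MetricSpace X] [CompactSpace X] [Nonempty X]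
    (T : X → X) (hT : Continuous T) [MeasurableSpace X] [BorelSpace X]
    (μ : Measure X) [IsProbabilityMeasure μ] (hμ : Ergodic T μ)
    (M : Set X) (hM : MeasurableSet M) (hM1 : μ M = 1)
    (h0 : ∀ x ∈ M, ∀ y ∈ M, rhoFK T x y = 0)
    (k : ℕ) (hk : 1 ≤ k) (P : X → Fin k) (hP : Measurable P)
    (ε : ℝ) (hε : 0 < ε) :
    ∃ N : ℕ, ∀ n ≥ N, ∃ w : Fin n → Fin k,
      ENNReal.ofReal (1 - ε) ≤ μ {x : X | editDist n w (pName T P n x) < ε} := by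
  classical
  rcases le_or_gt 1 ε with hε1 | hε1
  · refine ⟨0, fun n _ => ⟨fun _ => ⟨0, hk⟩, ?_⟩⟩
    have h1 : ENNReal.ofReal (1 - ε) = 0 := by
      rw [ENNReal.ofReal_eq_zero]; linarith
    simp [h1]
  set γ : ℝ := ε / 4 with hγdef
  have hγpos : 0 < γ := by positivity
  obtain ⟨K, hKclosed, hKsmall, δ0, hδ0, hsep0⟩ :=
    FKProof.exists_compact_partition μ hk P hP (c := γ * (ε^2/8)) (by positivity)
  set δ : ℝ := min δ0 (ε/4) with hδdef
  have hδpos : 0 < δ := lt_min hδ0 (by positivity)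
  have hδle : δ ≤ ε/4 := min_le_right _ _
  have hsep : ∀ a ∈ K, ∀ b ∈ K, dist a b < δ → P a = P b :=
    fun a ha b hb hab => hsep0 a ha b hb (lt_of_lt_of_le hab (min_le_left _ _))
  set ν := μ.prod μ with hνdef
  haveI : IsProbabilityMeasure ν := by rw [hνdef]; infer_instance
  set E : ℕ → Set (X × X) := fun N =>
    ⋂ (m : ℕ) (_ : N ≤ m ∧ 0 < m), {p : X × X | fbarN T δ m p.1 p.2 < δ} with hEdef
  have hEmeas : ∀ N, MeasurableSet (E N) := fun N =>
    MeasurableSet.iInter fun m => MeasurableSet.iInter fun hm =>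
      (FKProof.isOpen_fbarN_lt T hT δ hm.2).measurableSet
  have hEmono : Monotone E := by
    intro N N' hNN'
    refine Set.iInter_mono fun m => ?_
    intro p hp
    simp only [Set.mem_iInter] at hp ⊢
    exact fun hm => hp ⟨le_trans hNN' hm.1, hm.2⟩
  have hMM : (M ×ˢ M : Set (X × X)) ⊆ ⋃ N, E N := by
    rintro ⟨x, y⟩ ⟨hx, hy⟩
    have h1 := FKProof.fbar_lt_of_rhoFK_eq_zero (h0 x hx y hy) hδpos
    obtain ⟨N, hN⟩ := Filter.eventually_atTop.1 (FKProof.eventually_fbarN_lt h1)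
    refine Set.mem_iUnion.2 ⟨N, ?_⟩
    simp only [hEdef, Set.mem_iInter]
    exact fun m hm => hN m hm.1
  have hνMM : ν (M ×ˢ M) = 1 := by
    rw [hνdef, Measure.prod_prod, hM1, one_mul]
  have hνUnion : ν (⋃ N, E N) = 1 :=
    le_antisymm prob_le_one (hνMM ▸ measure_mono hMM)
  have htend := tendsto_measure_iUnion_atTop (μ := ν) hEmono
  rw [hνUnion] at htend
  have hone : ENNReal.ofReal (ε^2/8) ≠ 0 := by
    simp only [ne_eq, ENNReal.ofReal_eq_zero, not_le]; positivity
  have hlt1 : (1 : ℝ≥0∞) - ENNReal.ofReal (ε^2/8) < 1 :=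
    ENNReal.sub_lt_self ENNReal.one_ne_top one_ne_zero hone
  obtain ⟨N₀, hN₀⟩ := ((tendsto_order.1 htend).1 _ hlt1).exists
  have heps1 : ENNReal.ofReal (ε^2/8) ≤ 1 := by
    rw [ENNReal.ofReal_le_one]; nlinarith
  have hEc : ν (E N₀)ᶜ ≤ ENNReal.ofReal (ε^2/8) := by
    rw [prob_compl_eq_one_sub (hEmeas N₀)]
    rw [tsub_le_iff_right]
    have h2 : (1:ℝ≥0∞) - ENNReal.ofReal (ε^2/8) + ENNReal.ofReal (ε^2/8) = 1 :=
      tsub_add_cancel_of_le heps1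
    calc (1:ℝ≥0∞) = 1 - ENNReal.ofReal (ε^2/8) + ENNReal.ofReal (ε^2/8) := h2.symm
    _ ≤ ENNReal.ofReal (ε^2/8) + ν (E N₀) := by
        rw [add_comm]
        exact add_le_add_right hN₀.le _
  set Bad : ℕ → Set X := fun n =>
    {x | ¬ ((((Finset.range n).filter (fun i => T^[i] x ∉ K)).card : ℝ) ≤ γ * n)} with hBaddef
  have hBadmeas : ∀ n, MeasurableSet (Bad n) := by
    intro n
    have h1 := FKProof.measurable_badcount T hT K hKclosed.measurableSet n
    have : Bad n = {x | (((Finset.range n).filter (fun i => T^[i] x ∉ K)).card : ℝ) ≤ γ * n}ᶜ := by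
      ext x; simp [hBaddef]
    rw [this]
    exact (measurableSet_le h1 measurable_const).compl
  have hBadμ : ∀ n, 0 < n → μ (Bad n) ≤ ENNReal.ofReal (ε^2/8) := fun n hn =>
    FKProof.markov_bad T hT μ hμ.toMeasurePreserving K hKclosed.measurableSet hγpos hKsmall hn
  refine ⟨max N₀ 1, fun n hn => ?_⟩
  have hn0 : 0 < n := lt_of_lt_of_le one_pos (le_trans (le_max_right N₀ 1) hn)
  have hnN₀ : N₀ ≤ n := le_trans (le_max_left N₀ 1) hn
  set D : Set (X × X) := E N₀ ∩ ((Bad n)ᶜ ×ˢ (Bad n)ᶜ) with hDdef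
  have hDmeas : MeasurableSet D :=
    (hEmeas N₀).inter (((hBadmeas n).compl).prod ((hBadmeas n).compl))
  have hDsub : ∀ p : X × X, p ∈ D →
      editDist n (pName T P n p.1) (pName T P n p.2) < ε := by
    rintro ⟨y, x⟩ ⟨hpE, hpy, hpx⟩
    have hfb : fbarN T δ n y x < δ := by
      have := Set.mem_iInter.1 hpE n
      exact Set.mem_iInter.1 this ⟨hnN₀, hn0⟩
    have hy' : (((Finset.range n).filter (fun i => T^[i] y ∉ K)).card : ℝ) ≤ γ * n :=
      not_not.1 hpy
    have hx' : (((Finset.range n).filter (fun i => T^[i] x ∉ K)).card : ℝ) ≤ γ * n :=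
      not_not.1 hpx
    have := FKProof.comb T P K hsep y x hn0 hfb hy' hx'
    calc editDist n (pName T P n y) (pName T P n x) < δ + 2 * γ := this
    _ ≤ ε/4 + 2 * (ε/4) := by rw [hγdef]; linarith
    _ < ε := by linarith
  have hνDc : ν Dᶜ ≤ ENNReal.ofReal (ε^2/8) + (ENNReal.ofReal (ε^2/8) + ENNReal.ofReal (ε^2/8)) := by
    have hsub : Dᶜ ⊆ (E N₀)ᶜ ∪ ((Bad n ×ˢ (Set.univ : Set X)) ∪ ((Set.univ : Set X) ×ˢ Bad n)) := by
      intro p hp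
      rw [hDdef, Set.compl_inter] at hp
      rcases hp with hp | hp
      · exact Or.inl hp
      · right
        rw [Set.compl_prod_eq_union] at hp
        rcases hp with hp | hp
        · exact Or.inl ⟨not_not.1 hp.1, Set.mem_univ _⟩
        · exact Or.inr ⟨Set.mem_univ _, not_not.1 hp.2⟩
    refine le_trans (measure_mono hsub) ?_
    refine le_trans (measure_union_le _ _) ?_
    refine add_le_add hEc ?_
    refine le_trans (measure_union_le _ _) ?_
    refine add_le_add ?_ ?_
    · rw [hνdef, Measure.prod_prod, measure_univ, mul_one]
      exact hBadμ n hn0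
    · rw [hνdef, Measure.prod_prod, measure_univ, one_mul]
      exact hBadμ n hn0
  have hνD : ENNReal.ofReal (1 - 3*(ε^2/8)) ≤ ν D := by
    have hsum : ν D + ν Dᶜ = 1 := by
      rw [measure_add_measure_compl hDmeas, measure_univ]
    have h3 : ν Dᶜ ≤ ENNReal.ofReal (3*(ε^2/8)) := by
      refine le_trans hνDc (le_of_eq ?_)
      rw [← ENNReal.ofReal_add (by positivity) (by positivity),
        ← ENNReal.ofReal_add (by positivity) (by positivity)]
      ring_nf
    have h4 : (1:ℝ≥0∞) - ENNReal.ofReal (3*(ε^2/8)) ≤ 1 - ν Dᶜ := tsub_le_tsub_left h3 1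
    have h5 : (1:ℝ≥0∞) - ν Dᶜ ≤ ν D := by
      rw [tsub_le_iff_right, hsum]
    calc ENNReal.ofReal (1 - 3*(ε^2/8)) = 1 - ENNReal.ofReal (3*(ε^2/8)) := by
          rw [ENNReal.ofReal_sub _ (by positivity), ENNReal.ofReal_one]
    _ ≤ 1 - ν Dᶜ := h4
    _ ≤ ν D := h5
  by_contra hcon
  push_neg at hcon
  have hub : ∀ y : X, μ (Prod.mk y ⁻¹' D) < ENNReal.ofReal (1 - ε) := by
    intro y
    refine lt_of_le_of_lt (measure_mono ?_) (hcon (pName T P n y))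
    intro x hx
    exact hDsub (y, x) hx
  have hint : ν D ≤ ENNReal.ofReal (1 - ε) := by
    rw [hνdef, Measure.prod_apply hDmeas]
    calc ∫⁻ y, μ (Prod.mk y ⁻¹' D) ∂μ ≤ ∫⁻ _, ENNReal.ofReal (1 - ε) ∂μ :=
          lintegral_mono fun y => (hub y).le
    _ = ENNReal.ofReal (1 - ε) := by simp
  have hfinal : ENNReal.ofReal (1 - 3*(ε^2/8)) ≤ ENNReal.ofReal (1 - ε) :=
    le_trans hνD hint
  rw [ENNReal.ofReal_le_ofReal_iff (by linarith)] at hfinal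
  nlinarith
end
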